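/- arXiv:0803.2722 — 5 statements merged into one kernel-verified Lean document; each statement's English description precedes it below -/
import Mathlib

section
/- In a Coxeter group W with simple generators S, two simple reflections s and s' are conjugate in W if and only if they lie in the same connected component of the graph Γ^odd whose vertex set is S and whose edges join pairs s, s' with m(s,s') odd (with m(s,s') = ∞ counted as even). -/
/-- The graph `Γ^odd` on the simple generators: `s` and `s'` are adjacent exactly when
`m(s,s')` is odd (with `m(s,s') = ∞`, encoded as `0`, counted as even). -/
def oddCoxeterGraph {B : Type*} (M : CoxeterMatrix B) : SimpleGraph B where
  Adj i j := i ≠ j ∧ Odd (M i j)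
  symm := by
    constructor
    intro i j ⟨h1, h2⟩
    exact ⟨h1.symm, by rwa [M.symmetric j i]⟩
  loopless := by
    constructor
    intro i h
    exact h.1 rfl

private lemma conj_of_odd {B W : Type*} [Group W] {M : CoxeterMatrix B}
    (cs : CoxeterSystem M W) {i j : B} (h : Odd (M i j)) :
    IsConj (cs.simple i) (cs.simple j) := by
  obtain ⟨k, hk⟩ := h
  set a := cs.simple i with ha
  set b := cs.simple j with hb
  have h1 : (a * b) ^ (2 * k + 1) = 1 := by
    rw [← hk]; exact cs.simple_mul_simple_pow i j
  have hconj : (MulAut.conj b) (a * b) = (a * b)⁻¹ := by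
    simp [MulAut.conj_apply, ha, hb, mul_assoc]
  have h2 : b * (a * b) ^ k * b⁻¹ = ((a * b) ^ k)⁻¹ := by
    have := map_pow (MulAut.conj b) (a * b) k
    rw [hconj, inv_pow] at this
    simpa [MulAut.conj_apply] using this
  have hinv : ((a * b) ^ k)⁻¹ = (a * b) ^ (k + 1) := by
    apply inv_eq_of_mul_eq_one_left
    rw [← pow_add, show k + 1 + k = 2 * k + 1 by ring]
    exact h1
  have h3 : b * (a * b) ^ k = ((a * b) ^ k)⁻¹ * b := by
    have := congrArg (· * b) h2
    simpa [mul_assoc, hb] using this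
  have h4 : b * (a * b) ^ k = (a * b) ^ k * a := by
    rw [h3, hinv, pow_succ]
    simp [ha, hb, mul_assoc]
  rw [isConj_iff]
  refine ⟨(a * b) ^ k, ?_⟩
  rw [← h4]
  simp [mul_assoc]

/-- Two simple reflections `s`, `s'` of a Coxeter group are conjugate if and
only if they lie in the same connected component of the graph `Γ^odd`. -/
theorem simple_isConj_iff_oddGraph_reachable
    {B W : Type*} [Group W] {M : CoxeterMatrix B} (cs : CoxeterSystem M W) (s s' : B) :
    IsConj (cs.simple s) (cs.simple s') ↔ (oddCoxeterGraph M).Reachable s s' := by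
  classical
  constructor
  · intro hconj
    by_contra hnr
    -- sign character supported on the component of `s`
    set f : B → Multiplicative (ZMod 2) := fun b =>
      Multiplicative.ofAdd (if (oddCoxeterGraph M).Reachable s b then 1 else 0) with hf
    have sq : ∀ g : Multiplicative (ZMod 2), g * g = 1 := by decide
    have hlift : M.IsLiftable f := by
      intro i i'
      rcases Nat.even_or_odd (M i i') with he | ho
      · obtain ⟨m, hm⟩ := he
        rw [hm, show m + m = 2 * m by ring, pow_mul, pow_two, sq, one_pow]
      · have hfe : f i = f i' := by
          rcases eq_or_ne i i' with rfl | hne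
          · rfl
          · have hr : (oddCoxeterGraph M).Reachable i i' :=
              SimpleGraph.Adj.reachable ⟨hne, ho⟩
            have hiff : (oddCoxeterGraph M).Reachable s i ↔
                (oddCoxeterGraph M).Reachable s i' :=
              ⟨fun h => h.trans hr, fun h => h.trans hr.symm⟩
            show Multiplicative.ofAdd
                (if (oddCoxeterGraph M).Reachable s i then (1 : ZMod 2) else 0) =
              Multiplicative.ofAdd
                (if (oddCoxeterGraph M).Reachable s i' then (1 : ZMod 2) else 0)
            simp only [hiff]
        obtain ⟨m, hm⟩ := ho
        rw [hm, pow_succ, pow_mul, pow_two, hfe, sq, one_pow, one_mul, ← hfe, sq]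
    set φ := cs.lift ⟨f, hlift⟩ with hφ
    have heq : φ (cs.simple s) = φ (cs.simple s') := by
      obtain ⟨c, hc⟩ := hconj
      have h := congrArg φ hc
      rw [map_mul, map_mul, mul_comm (φ (cs.simple s')) (φ c)] at h
      exact mul_left_cancel h
    rw [hφ, cs.lift_apply_simple hlift, cs.lift_apply_simple hlift] at heq
    simp only [hf, if_pos (SimpleGraph.Reachable.refl s), if_neg hnr] at heq
    exact one_ne_zero (Multiplicative.ofAdd.injective heq)
  · intro hr
    obtain ⟨p⟩ := hr
    induction p with
    | nil => exact IsConj.refl _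
    | cons h _ ih => exact (conj_of_odd cs h.2).trans ih
end

section
/- Let A be a crystallographic generalized Cartan matrix for a Coxeter group W (integer entries, a_{ss}=2, a_{ss'} ≤ 0 with a_{ss'}a_{s's} = 4cos²(π/m(s,s')) when m(s,s') < ∞ and a_{ss'}a_{s's} ≥ 4 when m(s,s') = ∞, and a_{ss'}=0 iff a_{s's}=0). If δ : S → ℝ_{>0} satisfies δ(s)a_{ss'} = δ(s')a_{s's} for all s, s' ∈ S, then δ(s) = δ(s') whenever s and s' are conjugate in W. -/
/-- Let `A` be a crystallographic generalized Cartan matrix for a Coxeter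
group `W` (integer entries, `a s s = 2`, `a s s' ≤ 0` off the diagonal with
`a s s' * a s' s = 4 cos²(π / m(s,s'))` when `m(s,s') < ∞` and `a s s' * a s' s ≥ 4` when
`m(s,s') = ∞` (encoded as `M s s' = 0`), and `a s s' = 0 ↔ a s' s = 0`).  If
`δ : S → ℝ_{>0}` satisfies `δ s * a s s' = δ s' * a s' s` for all `s, s'`, then
`δ s = δ s'` whenever the simple reflections `s` and `s'` are conjugate in `W`. -/
theorem delta_eq_of_isConj_of_crystallographic
    {B W : Type*} [Group W] {M : CoxeterMatrix B} (cs : CoxeterSystem M W)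
    (a : B → B → ℤ)
    (hdiag : ∀ s, a s s = 2)
    (hoff : ∀ s s', s ≠ s' → a s s' ≤ 0)
    (hfin : ∀ s s', s ≠ s' → M s s' ≠ 0 →
      ((a s s' : ℝ) * (a s' s : ℝ) = 4 * Real.cos (Real.pi / (M s s' : ℝ)) ^ 2))
    (hinf : ∀ s s', s ≠ s' → M s s' = 0 → (4 : ℤ) ≤ a s s' * a s' s)
    (hzero : ∀ s s', a s s' = 0 ↔ a s' s = 0)
    (δ : B → ℝ) (hδpos : ∀ s, 0 < δ s)
    (hδ : ∀ s s', δ s * (a s s' : ℝ) = δ s' * (a s' s : ℝ))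
    (s s' : B) (hconj : IsConj (cs.simple s) (cs.simple s')) :
    δ s = δ s' := by
  classical
  have pi_pos := Real.pi_pos
  -- Step lemma: odd-adjacent simple reflections have equal δ.
  have step : ∀ t t', Odd (M t t') → δ t = δ t' := by
    intro t t' hodd
    rcases eq_or_ne t t' with rfl | hne
    · rfl
    have hm1 : M t t' ≠ 1 := M.off_diagonal t t' hne
    obtain ⟨k, hk⟩ := hodd
    have hm0 : M t t' ≠ 0 := by omega
    have hm3 : 3 ≤ M t t' := by omega
    set m : ℝ := (M t t' : ℝ) with hm
    have hm3' : (3 : ℝ) ≤ m := by rw [hm]; exact_mod_cast hm3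
    set θ : ℝ := Real.pi / m with hθdef
    have hθpos : 0 < θ := by positivity
    have hθle : θ ≤ Real.pi / 3 :=
      div_le_div_of_nonneg_left pi_pos.le (by norm_num) hm3'
    have hθlepi : θ ≤ Real.pi := hθle.trans (by linarith)
    set c : ℝ := Real.cos θ with hc
    have h12 : (1 / 2 : ℝ) ≤ c := by
      have := Real.cos_le_cos_of_nonneg_of_le_pi hθpos.le (by linarith) hθle
      rwa [Real.cos_pi_div_three] at this
    have hc1 : c ≤ 1 := Real.cos_le_one θ
    have hc0 : 0 ≤ c := by linarith
    have hn : ((a t t' * a t' t : ℤ) : ℝ) = 4 * c ^ 2 := by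
      push_cast
      exact hfin t t' hne hm0
    -- helper: determine m from the value of c in the bad cases
    have mval : ∀ x : ℝ, 1 ≤ x → c = Real.cos (Real.pi / x) → m = x := by
      intro x hx1 hcx
      have hx0 : 0 < x := by linarith
      have hθx : θ = Real.pi / x :=
        Real.injOn_cos ⟨hθpos.le, hθlepi⟩
          ⟨by positivity, div_le_self pi_pos.le hx1⟩ hcx
      rw [hθdef] at hθx
      have h2 := (div_eq_div_iff (show (m:ℝ) ≠ 0 by linarith) hx0.ne').mp hθx
      have h3 : Real.pi * x = Real.pi * m := by linarith
      exact (mul_left_cancel₀ Real.pi_ne_zero h3).symm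
    have h1n : (1 : ℤ) ≤ a t t' * a t' t := by
      have : (1 : ℝ) ≤ ((a t t' * a t' t : ℤ) : ℝ) := by rw [hn]; nlinarith
      exact_mod_cast this
    have h4n : a t t' * a t' t ≤ 4 := by
      have : ((a t t' * a t' t : ℤ) : ℝ) ≤ 4 := by rw [hn]; nlinarith
      exact_mod_cast this
    have sqrt2 : Real.sqrt 2 ^ 2 = 2 := Real.sq_sqrt (by norm_num)
    have sqrt3 : Real.sqrt 3 ^ 2 = 3 := Real.sq_sqrt (by norm_num)
    have meqnat : ∀ j : ℕ, m = (j : ℝ) → M t t' = j := by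
      intro j hj; rw [hm] at hj; exact_mod_cast hj
    interval_cases hna : (a t t' * a t' t)
    · -- product = 1 : the good case
      have ha : a t t' = -1 := by
        have hu : IsUnit (a t t') := IsUnit.of_mul_eq_one _ hna
        rcases Int.isUnit_iff.mp hu with h | h
        · exfalso; have := hoff t t' hne; omega
        · exact h
      have hb : a t' t = -1 := by rw [ha] at hna; omega
      have := hδ t t'
      rw [ha, hb] at this
      push_cast at this
      linarith
    · -- product = 2 : forces m = 4, contradicting oddness
      exfalso
      have hn2 : (4 : ℝ) * c ^ 2 = 2 := by rw [← hn]; norm_num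
      have hcv : c = Real.cos (Real.pi / 4) := by
        rw [Real.cos_pi_div_four]
        refine (sq_eq_sq₀ hc0 (by positivity)).mp ?_
        rw [div_pow, sqrt2]; nlinarith
      have := meqnat 4 (mval 4 (by norm_num) (by exact_mod_cast hcv))
      omega
    · -- product = 3 : forces m = 6, contradicting oddness
      exfalso
      have hn3 : (4 : ℝ) * c ^ 2 = 3 := by rw [← hn]; norm_num
      have hcv : c = Real.cos (Real.pi / 6) := by
        rw [Real.cos_pi_div_six]
        refine (sq_eq_sq₀ hc0 (by positivity)).mp ?_
        rw [div_pow, sqrt3]; nlinarith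
      have := meqnat 6 (mval 6 (by norm_num) (by exact_mod_cast hcv))
      omega
    · -- product = 4 : forces θ = 0, impossible
      exfalso
      have hn4 : (4 : ℝ) * c ^ 2 = 4 := by rw [← hn]; norm_num
      have hcv : c = Real.cos 0 := by
        rw [Real.cos_zero]
        refine (sq_eq_sq₀ hc0 (by norm_num)).mp ?_
        nlinarith
      have hθ0 : θ = 0 :=
        Real.injOn_cos ⟨hθpos.le, hθlepi⟩ ⟨le_refl 0, pi_pos.le⟩ hcv
      linarith
  -- Connectivity in the odd graph
  set R : B → B → Prop := fun t t' => Odd (M t t') with hR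
  set C : B → Prop := Relation.ReflTransGen R s with hCdef
  set f : B → ℤˣ := fun t => if C t then -1 else 1 with hf
  have hlift : M.IsLiftable f := by
    intro t t'
    rcases Nat.even_or_odd (M t t') with he | ho
    · obtain ⟨k, hk⟩ := he
      rw [hk, pow_add, ← mul_pow, Int.units_mul_self, one_pow]
    · have hEq : f t = f t' := by
        have hiff : C t ↔ C t' := by
          constructor
          · intro h; exact h.tail ho
          · intro h
            refine h.tail ?_
            show Odd (M t' t)
            rw [M.symmetric t' t]
            exact ho
        simp only [hf, if_congr hiff rfl rfl]
      rw [hEq, Int.units_mul_self, one_pow]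
  set φ := cs.lift ⟨f, hlift⟩ with hφ
  have hφs : φ (cs.simple s) = -1 := by
    rw [hφ, cs.lift_apply_simple hlift, hf]
    simp only [if_pos (show C s from Relation.ReflTransGen.refl)]
  have hφs' : φ (cs.simple s') = f s' := cs.lift_apply_simple hlift s'
  obtain ⟨w, hw⟩ := hconj
  have hconj' : φ (cs.simple s) = φ (cs.simple s') := by
    have h2 : φ (cs.simple s) * φ (w : W) = φ (cs.simple s') * φ (w : W) := by
      rw [mul_comm, ← map_mul, hw, map_mul]
    exact mul_right_cancel h2
  have hCs' : C s' := by
    by_contra hcon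
    rw [hconj', hφs', hf] at hφs
    simp only [if_neg hcon] at hφs
    exact absurd hφs (by decide)
  -- walk the path
  clear hconj' hw hφs'
  induction hCs' with
  | refl => rfl
  | tail _ h2 ih => exact ih.trans (step _ _ h2)
end

section
/- Let W be a Coxeter group with a root system Φ in V arising from a symmetrizable generalized Cartan matrix. Let s ∈ S and let w ∈ W_{⟨s⟩} = W_{S∖{s}}. Then the positive root β_{wsw⁻¹} lies in the nonnegative linear span of {α_s} ∪ {β_t : t ∈ inv(w)}. -/
/-- A geometric (reflection) representation of the Coxeter system `cs`, arising from a
symmetrizable generalized Cartan matrix `a` with symmetrizing function `δ`.  The field `α`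
records the simple roots (a basis of `V`), `ρ` is the reflection representation, and `β`
assigns to each reflection `t = w sᵢ w⁻¹` its positive root (the member of `±(w · αᵢ)` lying
in the nonnegative span of the simple roots). -/
structure CoxeterGeomRep {B W : Type*} [Group W] (M : CoxeterMatrix B)
    (cs : CoxeterSystem M W) (V : Type*) [AddCommGroup V] [Module ℝ V] where
  /-- the generalized Cartan matrix -/
  a : B → B → ℝ
  /-- the symmetrizing function -/
  δ : B → ℝ
  δ_pos : ∀ i, 0 < δ i
  symmetrize : ∀ i j, δ i * a i j = δ j * a j i
  δ_conj : ∀ i j, IsConj (cs.simple i) (cs.simple j) → δ i = δ j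
  a_diag : ∀ i, a i i = 2
  a_offdiag : ∀ i j, i ≠ j → a i j ≤ 0
  a_fin : ∀ i j, i ≠ j → M i j ≠ 0 →
    a i j * a j i = 4 * Real.cos (Real.pi / (M i j : ℝ)) ^ 2
  a_inf : ∀ i j, M i j = 0 → 4 ≤ a i j * a j i
  a_zero : ∀ i j, a i j = 0 ↔ a j i = 0
  /-- the simple roots, a basis of `V` -/
  α : Module.Basis B ℝ V
  /-- the reflection representation of `W` on `V` -/
  ρ : W →* (V ≃ₗ[ℝ] V)
  act : ∀ i j, ρ (cs.simple i) (α j) = α j - a i j • α i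
  /-- the positive root associated to each reflection -/
  β : W → V
  β_root : ∀ (w : W) (i : B),
    β (w * cs.simple i * w⁻¹) = ρ w (α i) ∨ β (w * cs.simple i * w⁻¹) = -(ρ w (α i))
  β_pos : ∀ t, cs.IsReflection t →
    ∃ c : B →₀ ℝ, (∀ i, 0 ≤ c i) ∧ β t = c.sum fun i r => r • α i

/-- `v` lies in the nonnegative linear span (the cone generated by) the set `X`. -/
def InCone {V : Type*} [AddCommGroup V] [Module ℝ V] (X : Set V) (v : V) : Prop :=
  ∃ (n : ℕ) (x : Fin n → V) (c : Fin n → ℝ),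
    (∀ k, x k ∈ X) ∧ (∀ k, 0 ≤ c k) ∧ v = ∑ k, c k • x k

/-- `R` is the set of canonical generators of the reflection subgroup `W'`:  every positive
root of a reflection of `W'` lies in the nonnegative span of `{β_r : r ∈ R}`, and no `β_r`
lies in the nonnegative span of the positive roots of the other reflections of `W'`. -/
def IsCanonicalGenerators {B W V : Type*} [Group W] [AddCommGroup V] [Module ℝ V]
    {M : CoxeterMatrix B} (cs : CoxeterSystem M W) (g : CoxeterGeomRep M cs V)
    (W' : Subgroup W) (R : Set W) : Prop :=
  R ⊆ {t | t ∈ W' ∧ cs.IsReflection t} ∧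
  (∀ t ∈ W', cs.IsReflection t → InCone (g.β '' R) (g.β t)) ∧
  ∀ r ∈ R, ¬ InCone (g.β '' ({t | t ∈ W' ∧ cs.IsReflection t} \ {r})) (g.β r)

section InConeLemmas

variable {V : Type*} [AddCommGroup V] [Module ℝ V]

theorem inCone_of_mem {X : Set V} {v : V} (hv : v ∈ X) : InCone X v :=
  ⟨1, fun _ => v, fun _ => 1, fun _ => hv, fun _ => zero_le_one, by simp⟩

theorem InCone.mono {X Y : Set V} (hXY : X ⊆ Y) {v : V} (h : InCone X v) : InCone Y v := by
  obtain ⟨n, x, c, hx, hc, rfl⟩ := h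
  exact ⟨n, x, c, fun k => hXY (hx k), hc, rfl⟩

theorem InCone.smul {X : Set V} {v : V} {r : ℝ} (hr : 0 ≤ r) (h : InCone X v) :
    InCone X (r • v) := by
  obtain ⟨n, x, c, hx, hc, rfl⟩ := h
  refine ⟨n, x, fun k => r * c k, hx, fun k => mul_nonneg hr (hc k), ?_⟩
  rw [Finset.smul_sum]
  exact Finset.sum_congr rfl fun k _ => by rw [smul_smul]

theorem InCone.add {X : Set V} {v w : V} (hv : InCone X v) (hw : InCone X w) :
    InCone X (v + w) := by
  obtain ⟨n, x, c, hx, hc, rfl⟩ := hv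
  obtain ⟨m, y, d, hy, hd, rfl⟩ := hw
  refine ⟨n + m, Fin.append x y, Fin.append c d, ?_, ?_, ?_⟩
  · intro k
    refine Fin.addCases (fun k0 => ?_) (fun k0 => ?_) k
    · simpa [Fin.append_left] using hx k0
    · simpa [Fin.append_right] using hy k0
  · intro k
    refine Fin.addCases (fun k0 => ?_) (fun k0 => ?_) k
    · simpa [Fin.append_left] using hc k0
    · simpa [Fin.append_right] using hd k0
  · rw [Fin.sum_univ_add]
    congr 1
    · exact Finset.sum_congr rfl fun k _ => by rw [Fin.append_left, Fin.append_left]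
    · exact Finset.sum_congr rfl fun k _ => by rw [Fin.append_right, Fin.append_right]

end InConeLemmas

section Rep
open CoxeterSystem

variable {B W : Type*} [Group W] {M : CoxeterMatrix B} {cs : CoxeterSystem M W}
  {V : Type*} [AddCommGroup V] [Module ℝ V] (g : CoxeterGeomRep M cs V)

theorem repr_beta_nonneg {t : W} (ht : cs.IsReflection t) (b : B) :
    0 ≤ g.α.repr (g.β t) b := by
  obtain ⟨c, hc, hβ⟩ := g.β_pos t ht
  have h2 : g.β t = Finsupp.linearCombination ℝ g.α c := by
    rw [hβ, Finsupp.linearCombination_apply]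
  rw [h2, Module.Basis.repr_linearCombination]
  exact hc b

theorem repr_rho_simple_apply {i b : B} (hib : i ≠ b) (v : V) :
    g.α.repr (g.ρ (cs.simple i) v) b = g.α.repr v b := by
  have h : (Finsupp.lapply b ∘ₗ (g.α.repr : V →ₗ[ℝ] (B →₀ ℝ)) ∘ₗ
        (g.ρ (cs.simple i)).toLinearMap)
      = Finsupp.lapply b ∘ₗ (g.α.repr : V →ₗ[ℝ] (B →₀ ℝ)) := by
    apply g.α.ext
    intro j
    simp only [LinearMap.comp_apply, LinearEquiv.coe_toLinearMap, LinearEquiv.coe_coe,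
      Finsupp.lapply_apply, g.act i j, map_sub, map_smul, Module.Basis.repr_self,
      Finsupp.sub_apply, Finsupp.smul_apply]
    rw [Finsupp.single_eq_of_ne' hib]
    simp
  exact LinearMap.congr_fun h v

theorem repr_rho_closure {s : B} {w : W}
    (hw : w ∈ Subgroup.closure (cs.simple '' {i | i ≠ s})) (v : V) :
    g.α.repr (g.ρ w v) s = g.α.repr v s := by
  refine Subgroup.closure_induction
    (p := fun w _ => ∀ v : V, g.α.repr (g.ρ w v) s = g.α.repr v s)
    ?_ ?_ ?_ ?_ hw v
  · rintro x ⟨i, hi, rfl⟩ v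
    exact repr_rho_simple_apply g hi v
  · intro v; simp
  · intro x y _ _ hx hy v
    rw [map_mul]
    have : g.ρ x * g.ρ y = g.ρ (x * y) := (map_mul g.ρ x y).symm
    calc g.α.repr ((g.ρ x * g.ρ y) v) s = g.α.repr (g.ρ x (g.ρ y v)) s := rfl
      _ = g.α.repr v s := by rw [hx, hy]
  · intro x _ hx v
    have h2 : g.ρ x (g.ρ x⁻¹ v) = v := by
      have : g.ρ x * g.ρ x⁻¹ = 1 := by rw [← map_mul, mul_inv_cancel, map_one]
      calc g.ρ x (g.ρ x⁻¹ v) = (g.ρ x * g.ρ x⁻¹) v := rfl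
        _ = v := by rw [this]; rfl
    rw [← hx (g.ρ x⁻¹ v), h2]

theorem beta_conj_eq_of_repr_pos {w : W} {i : B} {b : B}
    (hpos : 0 < g.α.repr (g.ρ w (g.α i)) b) :
    g.β (w * cs.simple i * w⁻¹) = g.ρ w (g.α i) := by
  rcases g.β_root w i with h | h
  · exact h
  · exfalso
    have h1 := repr_beta_nonneg g
      ((cs.isReflection_simple i).conj w) b
    rw [h, map_neg, Finsupp.neg_apply] at h1
    linarith

theorem exists_repr_pos {v : V} (hv : v ≠ 0) (h : ∀ b, 0 ≤ g.α.repr v b) :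
    ∃ b, 0 < g.α.repr v b := by
  by_contra hc
  push_neg at hc
  apply hv
  have : g.α.repr v = 0 := by
    ext b
    exact le_antisymm (hc b) (h b)
  simpa using congrArg (g.α.repr.symm) this

end Rep

namespace StmtThreeAux

/-- coefficients of the orbit of a simple root under an alternating word -/
def rkCoeffs (P Q : ℝ) : ℕ → ℝ × ℝ
  | 0 => (1, 0)
  | n+1 =>
    if Even n then ((rkCoeffs P Q n).1, Q * (rkCoeffs P Q n).1 - (rkCoeffs P Q n).2)
    else (P * (rkCoeffs P Q n).2 - (rkCoeffs P Q n).1, (rkCoeffs P Q n).2)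

theorem sin_rec (θ : ℝ) (k : ℕ) :
    Real.sin (((k : ℝ) + 2) * θ)
      = 2 * Real.cos θ * Real.sin (((k : ℝ) + 1) * θ) - Real.sin ((k : ℝ) * θ) := by
  have h1 := Real.sin_add (((k : ℝ) + 1) * θ) θ
  have h2 := Real.sin_sub (((k : ℝ) + 1) * θ) θ
  have e1 : ((k : ℝ) + 1) * θ + θ = ((k : ℝ) + 2) * θ := by ring
  have e2 : ((k : ℝ) + 1) * θ - θ = (k : ℝ) * θ := by ring
  rw [e1] at h1
  rw [e2] at h2
  linarith

theorem rkCoeffs_sin_mul (P Q : ℝ) (m : ℕ) (hm : 3 ≤ m)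
    (hPQ : P * Q = 4 * Real.cos (Real.pi / m) ^ 2) (n : ℕ) :
    Real.sin (Real.pi / m) * (rkCoeffs P Q n).1
        = Real.sin ((if Even n then (n : ℝ) + 1 else (n : ℝ)) * (Real.pi / m)) ∧
      (2 * Real.cos (Real.pi / m)) * (Real.sin (Real.pi / m) * (rkCoeffs P Q n).2)
        = Q * Real.sin ((if Even n then (n : ℝ) else (n : ℝ) + 1) * (Real.pi / m)) := by
  set θ := Real.pi / m with hθ
  have hmpos : (0:ℝ) < m := by positivity
  have hθpos : 0 < θ := by positivity
  have hθlt : θ < Real.pi / 2 := by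
    rw [hθ, div_lt_div_iff₀ hmpos two_pos]
    have : (3:ℝ) ≤ m := by exact_mod_cast hm
    nlinarith [Real.pi_pos]
  have hc : 0 < Real.cos θ := Real.cos_pos_of_mem_Ioo ⟨by linarith, hθlt⟩
  induction n with
  | zero => simp [rkCoeffs]
  | succ n ih =>
    obtain ⟨ih1, ih2⟩ := ih
    have key := sin_rec θ n
    rcases Nat.even_or_odd n with he | ho
    · have hne : ¬ Even (n + 1) := by simp [Nat.even_add_one, he]
      rw [if_pos he] at ih1 ih2
      rw [rkCoeffs, if_pos he]
      simp only [if_neg hne]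
      push_cast
      have e : ((n:ℝ) + 1 + 1) = (n:ℝ) + 2 := by ring
      rw [e]
      constructor
      · exact ih1
      · linear_combination (2 * Real.cos θ * Q) * ih1 - ih2 - Q * key
    · have he' : ¬ Even n := Nat.not_even_iff_odd.mpr ho
      have hne : Even (n + 1) := Nat.even_add_one.mpr he'
      rw [if_neg he'] at ih1 ih2
      rw [rkCoeffs, if_neg he']
      simp only [if_pos hne]
      push_cast
      have e : ((n:ℝ) + 1 + 1) = (n:ℝ) + 2 := by ring
      rw [e]
      constructor
      · have h2c : (2 * Real.cos θ) ≠ 0 := by positivity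
        apply mul_left_cancel₀ h2c
        linear_combination P * ih2 - (2 * Real.cos θ) * ih1
          - (2 * Real.cos θ) * key + Real.sin (((n:ℝ) + 1) * θ) * hPQ
      · exact ih2

theorem rkCoeffs_nonneg_fin (P Q : ℝ) (hP : 0 ≤ P) (hQ : 0 ≤ Q) (m : ℕ) (hm : 3 ≤ m)
    (hPQ : P * Q = 4 * Real.cos (Real.pi / m) ^ 2) (n : ℕ) (hn : n + 1 ≤ m) :
    0 ≤ (rkCoeffs P Q n).1 ∧ 0 ≤ (rkCoeffs P Q n).2 := by
  obtain ⟨h1, h2⟩ := rkCoeffs_sin_mul P Q m hm hPQ n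
  have hmpos : (0:ℝ) < m := by positivity
  have hθpos : 0 < Real.pi / m := by positivity
  have hθlt : Real.pi / m < Real.pi / 2 := by
    rw [div_lt_div_iff₀ hmpos two_pos]
    have : (3:ℝ) ≤ m := by exact_mod_cast hm
    nlinarith [Real.pi_pos]
  have hc : 0 < Real.cos (Real.pi / m) := Real.cos_pos_of_mem_Ioo ⟨by linarith, hθlt⟩
  have hs : 0 < Real.sin (Real.pi / m) :=
    Real.sin_pos_of_pos_of_lt_pi hθpos (by linarith [Real.pi_pos])
  have hsin : ∀ k : ℝ, 0 ≤ k → k ≤ m → 0 ≤ Real.sin (k * (Real.pi / m)) := by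
    intro k hk0 hkm
    apply Real.sin_nonneg_of_nonneg_of_le_pi
    · positivity
    · rw [div_eq_mul_inv, ← mul_assoc]
      calc k * Real.pi * (m:ℝ)⁻¹ ≤ m * Real.pi * (m:ℝ)⁻¹ := by
            have := Real.pi_pos
            gcongr
        _ = Real.pi := by field_simp
  have hnm : ((n : ℝ) + 1) ≤ m := by exact_mod_cast hn
  have hnm' : ((n : ℝ)) ≤ m := by linarith
  constructor
  · have hpos : 0 ≤ Real.sin ((if Even n then (n : ℝ) + 1 else (n : ℝ)) * (Real.pi / m)) := by
      split <;> [exact hsin _ (by positivity) hnm; exact hsin _ (by positivity) hnm']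
    by_contra hneg
    push_neg at hneg
    have : Real.sin (Real.pi / m) * (rkCoeffs P Q n).1 < 0 := mul_neg_of_pos_of_neg hs hneg
    linarith
  · have hpos : 0 ≤ Q * Real.sin ((if Even n then (n : ℝ) else (n : ℝ) + 1) * (Real.pi / m)) := by
      have : 0 ≤ Real.sin ((if Even n then (n : ℝ) else (n : ℝ) + 1) * (Real.pi / m)) := by
        split <;> [exact hsin _ (by positivity) hnm'; exact hsin _ (by positivity) hnm]
      positivity
    by_contra hneg
    push_neg at hneg
    have : 2 * Real.cos (Real.pi / m) * (Real.sin (Real.pi / m) * (rkCoeffs P Q n).2) < 0 :=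
      mul_neg_of_pos_of_neg (by positivity) (mul_neg_of_pos_of_neg hs hneg)
    linarith

theorem rkCoeffs_nonneg_inf (P Q : ℝ) (hP : 0 ≤ P) (hQ : 0 ≤ Q) (h4 : 4 ≤ P * Q) (n : ℕ) :
    0 ≤ (rkCoeffs P Q n).1 ∧ 0 ≤ (rkCoeffs P Q n).2 := by
  suffices h : ∀ k, (0 ≤ (rkCoeffs P Q k).1 ∧ 0 ≤ (rkCoeffs P Q k).2) ∧
      (Even k → 2 * (rkCoeffs P Q k).2 ≤ Q * (rkCoeffs P Q k).1) ∧
      (¬ Even k → 2 * (rkCoeffs P Q k).1 ≤ P * (rkCoeffs P Q k).2) by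
    exact (h n).1
  intro k
  induction k with
  | zero => refine ⟨⟨zero_le_one, le_refl 0⟩, fun _ => by simpa [rkCoeffs] using hQ, fun h => absurd (Even.zero) h⟩
  | succ k ih =>
    obtain ⟨⟨hl, hmu⟩, hev, hod⟩ := ih
    rcases Nat.even_or_odd k with he | ho
    · have hne : ¬ Even (k + 1) := by simp [Nat.even_add_one, he]
      have h1 := hev he
      rw [rkCoeffs, if_pos he]
      dsimp only
      refine ⟨⟨hl, by linarith⟩, fun h => absurd h hne, fun _ => ?_⟩
      nlinarith [mul_le_mul_of_nonneg_left h1 hP, mul_le_mul_of_nonneg_right h4 hl]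
    · have he' : ¬ Even k := Nat.not_even_iff_odd.mpr ho
      have hne : Even (k + 1) := Nat.even_add_one.mpr he'
      have h1 := hod he'
      rw [rkCoeffs, if_neg he']
      dsimp only
      refine ⟨⟨by linarith, hmu⟩, fun _ => ?_, fun h => absurd hne h⟩
      nlinarith [mul_le_mul_of_nonneg_left h1 hQ, mul_le_mul_of_nonneg_right h4 hmu]

end StmtThreeAux

namespace StmtThreeAux

section Rank2
open CoxeterSystem

variable {B W : Type*} [Group W] {M : CoxeterMatrix B} {cs : CoxeterSystem M W}
  {V : Type*} [AddCommGroup V] [Module ℝ V] (g : CoxeterGeomRep M cs V)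

theorem rho_alternatingWord (i j : B) (n : ℕ) :
    g.ρ (cs.wordProd (alternatingWord i j n)) (g.α i)
      = (rkCoeffs (-(g.a i j)) (-(g.a j i)) n).1 • g.α i
        + (rkCoeffs (-(g.a i j)) (-(g.a j i)) n).2 • g.α j := by
  induction n with
  | zero =>
    rw [show alternatingWord i j 0 = [] from rfl, cs.wordProd_nil, map_one]
    simp [rkCoeffs]
  | succ n ih =>
    rw [alternatingWord_succ', cs.wordProd_cons, map_mul]
    have happ : (g.ρ (cs.simple (if Even n then j else i)) *
          g.ρ (cs.wordProd (alternatingWord i j n))) (g.α i)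
        = g.ρ (cs.simple (if Even n then j else i))
            (g.ρ (cs.wordProd (alternatingWord i j n)) (g.α i)) := rfl
    rw [happ, ih, rkCoeffs]
    by_cases hn : Even n
    · simp only [if_pos hn]
      rw [map_add, map_smul, map_smul, g.act j i, g.act j j, g.a_diag j]
      module
    · simp only [if_neg hn]
      rw [map_add, map_smul, map_smul, g.act i i, g.act i j, g.a_diag i]
      module

theorem rkCoeffs_nonneg_of_bound (i j : B) (hij : i ≠ j) (n : ℕ)
    (hn : M i j ≠ 0 → n + 1 ≤ M i j) :
    0 ≤ (rkCoeffs (-(g.a i j)) (-(g.a j i)) n).1 ∧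
      0 ≤ (rkCoeffs (-(g.a i j)) (-(g.a j i)) n).2 := by
  have hP : 0 ≤ -(g.a i j) := neg_nonneg.mpr (g.a_offdiag i j hij)
  have hQ : 0 ≤ -(g.a j i) := neg_nonneg.mpr (g.a_offdiag j i hij.symm)
  by_cases hM0 : M i j = 0
  · refine rkCoeffs_nonneg_inf _ _ hP hQ ?_ n
    have := g.a_inf i j hM0
    nlinarith
  · have hm1 : M i j ≠ 1 := M.off_diagonal i j hij
    rcases eq_or_lt_of_le (show 2 ≤ M i j by omega) with h2 | h3
    · have hn1 : n ≤ 1 := by omega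
      interval_cases n
      · simp [rkCoeffs]
      · rw [rkCoeffs, if_pos Even.zero]
        exact ⟨by simp [rkCoeffs], by simp [rkCoeffs, hQ]⟩
    · refine rkCoeffs_nonneg_fin _ _ hP hQ (M i j) (by omega) ?_ n (hn hM0)
      have := g.a_fin i j hij hM0
      nlinarith

end Rank2

section Comb
open CoxeterSystem

variable {B W : Type*} [Group W] {M : CoxeterMatrix B} (cs : CoxeterSystem M W)

/-- strip all right descents in `{i, j}` from `w` -/
theorem strip (i j : B) (w : W) :
    ∃ (u : W) (ω : List B), (∀ x ∈ ω, x = i ∨ x = j) ∧ w = u * cs.wordProd ω ∧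
      cs.length w = cs.length u + ω.length ∧
      ¬ cs.IsRightDescent u i ∧ ¬ cs.IsRightDescent u j := by
  suffices h : ∀ (N : ℕ) (w : W), cs.length w ≤ N → ∃ (u : W) (ω : List B),
      (∀ x ∈ ω, x = i ∨ x = j) ∧ w = u * cs.wordProd ω ∧
      cs.length w = cs.length u + ω.length ∧
      ¬ cs.IsRightDescent u i ∧ ¬ cs.IsRightDescent u j from
    h (cs.length w) w le_rfl
  intro N
  induction N with
  | zero =>
    intro w hw
    have hw1 : w = 1 := cs.length_eq_zero_iff.mp (Nat.le_zero.mp hw)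
    subst hw1
    exact ⟨1, [], by simp, by rw [cs.wordProd_nil, mul_one], by simp,
      cs.not_isRightDescent_one i, cs.not_isRightDescent_one j⟩
  | succ N ihN =>
    intro w hw
    by_cases hdi : cs.IsRightDescent w i
    · have hlen : cs.length (w * cs.simple i) + 1 = cs.length w :=
        (cs.isRightDescent_iff).mp hdi
      obtain ⟨u, ω, hmem, hprod, hn, hui, huj⟩ := ihN (w * cs.simple i) (by omega)
      refine ⟨u, ω.concat i, ?_, ?_, ?_, hui, huj⟩
      · intro x hx
        have hx' : x ∈ ω ∨ x = i := by simpa [List.concat_eq_append] using hx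
        rcases hx' with h | h
        · exact hmem x h
        · exact Or.inl h
      · rw [cs.wordProd_concat, ← mul_assoc, ← hprod, cs.simple_mul_simple_cancel_right]
      · rw [List.length_concat]
        omega
    · by_cases hdj : cs.IsRightDescent w j
      · have hlen : cs.length (w * cs.simple j) + 1 = cs.length w :=
          (cs.isRightDescent_iff).mp hdj
        obtain ⟨u, ω, hmem, hprod, hn, hui, huj⟩ := ihN (w * cs.simple j) (by omega)
        refine ⟨u, ω.concat j, ?_, ?_, ?_, hui, huj⟩
        · intro x hx
          have hx' : x ∈ ω ∨ x = j := by simpa [List.concat_eq_append] using hx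
          rcases hx' with h | h
          · exact hmem x h
          · exact Or.inr h
        · rw [cs.wordProd_concat, ← mul_assoc, ← hprod, cs.simple_mul_simple_cancel_right]
        · rw [List.length_concat]
          omega
      · exact ⟨w, [], by simp, by rw [cs.wordProd_nil, mul_one], by simp, hdi, hdj⟩

theorem chain'_ne_of_reduced : ∀ {ω : List B}, cs.IsReduced ω → List.Chain' (· ≠ ·) ω
  | [], _ => List.isChain_nil
  | [_], _ => List.isChain_singleton _
  | x :: y :: t, hr => by
    have hxy : x ≠ y := by
      rintro rfl
      have : cs.wordProd (x :: x :: t) = cs.wordProd t := by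
        rw [cs.wordProd_cons, cs.wordProd_cons, cs.simple_mul_simple_cancel_left]
      have h1 : cs.length (cs.wordProd (x :: x :: t)) ≤ t.length := by
        rw [this]; exact cs.length_wordProd_le t
      have h2 := hr
      unfold CoxeterSystem.IsReduced at h2
      simp at h2
      omega
    have ht : cs.IsReduced (y :: t) := by
      have := CoxeterSystem.IsReduced.drop (cs := cs) (ω := x :: y :: t) hr 1
      simpa using this
    exact List.IsChain.cons_cons hxy (chain'_ne_of_reduced ht)

theorem eq_alternatingWord (i j : B) (hij : i ≠ j) :
    ∀ (ω : List B) (hne : ω ≠ []), (∀ x ∈ ω, x = i ∨ x = j) →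
      List.Chain' (· ≠ ·) ω → ω.getLast hne = j →
      ω = CoxeterSystem.alternatingWord i j ω.length
  | [], hne, _, _, _ => absurd rfl hne
  | [x], _, hmem, _, hlast => by
    have : x = j := hlast
    subst this
    rfl
  | x :: y :: t, _, hmem, hchain, hlast => by
    have hyt : (y :: t) ≠ [] := by simp
    have ih := eq_alternatingWord i j hij (y :: t) hyt
      (fun z hz => hmem z (List.mem_cons_of_mem x hz))
      hchain.tail
      (by rw [← List.getLast_cons (l := y :: t) hyt]; exact hlast)
    have hxy : x ≠ y := List.isChain_cons_cons.mp hchain |>.1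
    rw [List.length_cons]
    rw [alternatingWord_succ' i j]
    have hhead : y = (if Even t.length then j else i) := by
      have := ih
      rw [List.length_cons, alternatingWord_succ' i j] at this
      exact (List.cons_eq_cons.mp this).1
    have hx : x = (if Even (y :: t).length then j else i) := by
      rw [List.length_cons]
      rcases Nat.even_or_odd t.length with he | ho
      · rw [if_neg (by simp [Nat.even_add_one, he])]
        rcases hmem x (List.mem_cons_self) with h | h
        · exact h
        · exfalso
          rw [hhead, if_pos he] at hxy
          exact hxy h
      · rw [if_pos (Nat.even_add_one.mpr (Nat.not_even_iff_odd.mpr ho))]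
        rcases hmem x (List.mem_cons_self) with h | h
        · exfalso
          rw [hhead, if_neg (Nat.not_even_iff_odd.mpr ho)] at hxy
          exact hxy h
        · exact h
    rw [← hx, ← ih]

end Comb

end StmtThreeAux

namespace StmtThreeAux

section Positivity
open CoxeterSystem

variable {B W : Type*} [Group W] {M : CoxeterMatrix B} {cs : CoxeterSystem M W}
  {V : Type*} [AddCommGroup V] [Module ℝ V] (g : CoxeterGeomRep M cs V)

/-- The positivity theorem: if `ℓ(w sᵢ) > ℓ(w)`, then `w · αᵢ` is a nonnegative combination
of simple roots. -/
theorem repr_rho_nonneg (w : W) (i : B) (hd : ¬ cs.IsRightDescent w i) (b : B) :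
    0 ≤ g.α.repr (g.ρ w (g.α i)) b := by
  suffices h : ∀ (N : ℕ) (w : W), cs.length w ≤ N → ∀ (i : B), ¬ cs.IsRightDescent w i →
      ∀ b, 0 ≤ g.α.repr (g.ρ w (g.α i)) b from h (cs.length w) w le_rfl i hd b
  intro N
  induction N with
  | zero =>
    intro w hw i _ b
    have hw1 : w = 1 := cs.length_eq_zero_iff.mp (Nat.le_zero.mp hw)
    subst hw1
    rw [map_one]
    show 0 ≤ g.α.repr (g.α i) b
    rw [Module.Basis.repr_self]
    rcases eq_or_ne i b with rfl | hne
    · simp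
    · rw [Finsupp.single_eq_of_ne' hne]
  | succ N ihN =>
    intro w hw i hdi b
    rcases eq_or_ne w 1 with rfl | hw1
    · rw [map_one]
      show 0 ≤ g.α.repr (g.α i) b
      rw [Module.Basis.repr_self]
      rcases eq_or_ne i b with rfl | hne
      · simp
      · rw [Finsupp.single_eq_of_ne' hne]
    obtain ⟨j, hdj⟩ := cs.exists_rightDescent_of_ne_one hw1
    have hij : i ≠ j := fun h => hdi (h ▸ hdj)
    obtain ⟨u, ω, hmem, hprod, hlen, hui, huj⟩ := strip cs i j w
    have hred : cs.length (cs.wordProd ω) = ω.length := by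
      have h1 : cs.length w ≤ cs.length u + cs.length (cs.wordProd ω) := by
        rw [hprod]; exact cs.length_mul_le u (cs.wordProd ω)
      have h2 := cs.length_wordProd_le ω
      omega
    have hωne : ω ≠ [] := by
      rintro rfl
      rw [cs.wordProd_nil, mul_one] at hprod
      exact huj (hprod ▸ hdj)
    -- the last letter of ω is j
    obtain ⟨ω', x, rfl⟩ := (List.eq_nil_or_concat ω).resolve_left hωne
    have hwsi_ne : cs.length (w * cs.simple i) = cs.length w + 1 :=
      (cs.not_isRightDescent_iff).mp hdi
    have hx : x = j := by
      rcases hmem x (by simp [List.concat_eq_append]) with h | h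
      · exfalso
        have hcanc : w * cs.simple i = u * cs.wordProd ω' := by
          rw [hprod, h, cs.wordProd_concat, mul_assoc, cs.simple_mul_simple_cancel_right]
        have hle : cs.length (w * cs.simple i) ≤ cs.length u + ω'.length := by
          rw [hcanc]
          calc cs.length (u * cs.wordProd ω') ≤ cs.length u + cs.length (cs.wordProd ω') :=
            cs.length_mul_le _ _
          _ ≤ cs.length u + ω'.length := by
            have := cs.length_wordProd_le ω'
            omega
        rw [List.length_concat] at hlen
        omega
      · exact h
    subst x
    -- ω is the alternating word
    have halt : ω'.concat j = alternatingWord i j (ω'.concat j).length := by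
      refine eq_alternatingWord i j hij _ (by simp [List.concat_eq_append]) hmem ?_ ?_
      · exact chain'_ne_of_reduced cs hred
      · simp only [List.concat_eq_append]
        exact List.getLast_concat
    set n := (ω'.concat j).length with hn_def
    have hn1 : n = ω'.length + 1 := by rw [hn_def, List.length_concat]
    -- bound on n in the finite case
    have hnm : M i j ≠ 0 → n + 1 ≤ M i j := by
      intro hM0
      have hle : n ≤ M i j := by
        by_contra hgt
        push_neg at hgt
        exact cs.not_isReduced_alternatingWord i j hM0 hgt
          (by rw [← halt]; exact hred)
      rcases eq_or_lt_of_le hle with heq | hlt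
      · exfalso
        -- ω is the braid word; rewrite via the braid relation to end with i
        have hm1 : 1 ≤ M i j := by omega
        have hbd : cs.wordProd (ω'.concat j) = cs.wordProd (alternatingWord j i (M i j)) := by
          rw [halt, heq]
          have h1 := cs.wordProd_braidWord_eq i j
          unfold CoxeterSystem.braidWord at h1
          rwa [M.symmetric j i] at h1
        have halt2 : alternatingWord j i (M i j)
            = (alternatingWord i j (M i j - 1)).concat i := by
          conv_lhs => rw [show M i j = (M i j - 1) + 1 by omega]
          exact alternatingWord_succ j i (M i j - 1)
        have hcanc : w * cs.simple i = u * cs.wordProd (alternatingWord i j (M i j - 1)) := by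
          rw [hprod, hbd, halt2, cs.wordProd_concat, mul_assoc,
            cs.simple_mul_simple_cancel_right]
        have hle2 : cs.length (w * cs.simple i)
            ≤ cs.length u + (M i j - 1) := by
          rw [hcanc]
          calc cs.length (u * cs.wordProd (alternatingWord i j (M i j - 1)))
              ≤ cs.length u + cs.length (cs.wordProd (alternatingWord i j (M i j - 1))) :=
                cs.length_mul_le _ _
          _ ≤ cs.length u + (M i j - 1) := by
            have := cs.length_wordProd_le (alternatingWord i j (M i j - 1))
            rw [length_alternatingWord] at this
            omega
        omega
      · omega
    -- now split off the rank-2 part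
    have hcoef := rkCoeffs_nonneg_of_bound g i j hij n hnm
    have hA := rho_alternatingWord g i j n
    rw [← halt] at hA
    have hsplit : g.ρ w (g.α i)
        = (rkCoeffs (-(g.a i j)) (-(g.a j i)) n).1 • g.ρ u (g.α i)
          + (rkCoeffs (-(g.a i j)) (-(g.a j i)) n).2 • g.ρ u (g.α j) := by
      rw [hprod, map_mul]
      calc (g.ρ u * g.ρ (cs.wordProd (ω'.concat j))) (g.α i)
          = g.ρ u (g.ρ (cs.wordProd (ω'.concat j)) (g.α i)) := rfl
        _ = _ := by rw [hA, map_add, map_smul, map_smul]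
    have hu_len : cs.length u ≤ N := by omega
    have h1 := ihN u hu_len i hui b
    have h2 := ihN u hu_len j huj b
    rw [hsplit, map_add, map_smul, map_smul, Finsupp.add_apply, Finsupp.smul_apply,
      Finsupp.smul_apply, smul_eq_mul, smul_eq_mul]
    have := hcoef.1
    have := hcoef.2
    positivity

end Positivity

end StmtThreeAux

namespace StmtThreeAux

section Main
open CoxeterSystem

variable {B W : Type*} [Group W] {M : CoxeterMatrix B} {cs : CoxeterSystem M W}
  {V : Type*} [AddCommGroup V] [Module ℝ V] (g : CoxeterGeomRep M cs V)

theorem beta_eq_rho_of_mem_closure (s : B) {w : W}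
    (hw : w ∈ Subgroup.closure (cs.simple '' {i | i ≠ s})) :
    g.β (w * cs.simple s * w⁻¹) = g.ρ w (g.α s) := by
  apply beta_conj_eq_of_repr_pos g (b := s)
  rw [repr_rho_closure g hw, Module.Basis.repr_self]
  simp

theorem main_aux (s : B) : ∀ (N : ℕ) (w : W), cs.length w ≤ N →
    w ∈ Subgroup.closure (cs.simple '' {i | i ≠ s}) →
    InCone ({g.α s} ∪ g.β '' {t | cs.IsLeftInversion w t})
      (g.β (w * cs.simple s * w⁻¹)) := by
  intro N
  induction N with
  | zero =>
    intro w hw hmem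
    have hw1 : w = 1 := cs.length_eq_zero_iff.mp (Nat.le_zero.mp hw)
    subst hw1
    rw [beta_eq_rho_of_mem_closure g s hmem, map_one]
    exact inCone_of_mem (Set.mem_union_left _ rfl)
  | succ N ihN =>
    intro w hw hmem
    rcases eq_or_ne w 1 with rfl | hw1
    · rw [beta_eq_rho_of_mem_closure g s hmem, map_one]
      exact inCone_of_mem (Set.mem_union_left _ rfl)
    obtain ⟨j, hdj⟩ := cs.exists_rightDescent_of_ne_one hw1
    -- j ≠ s
    have hjs : j ≠ s := by
      rintro rfl
      have hnd : ¬ cs.IsRightDescent (w * cs.simple j) j :=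
        (cs.isRightDescent_iff_not_isRightDescent_mul).mp hdj
      have hpos := repr_rho_nonneg g (w * cs.simple j) j hnd j
      have hneg : g.ρ (w * cs.simple j) (g.α j) = -(g.ρ w (g.α j)) := by
        rw [map_mul]
        calc (g.ρ w * g.ρ (cs.simple j)) (g.α j)
            = g.ρ w (g.ρ (cs.simple j) (g.α j)) := rfl
          _ = -(g.ρ w (g.α j)) := by
              rw [g.act j j, g.a_diag j]
              rw [show g.α j - (2:ℝ) • g.α j = -(g.α j) by module, map_neg]
      rw [hneg, map_neg, Finsupp.neg_apply, repr_rho_closure g hmem, Module.Basis.repr_self] at hpos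
      simp at hpos
      linarith
    set u := w * cs.simple j with hu_def
    have hu_mem : u ∈ Subgroup.closure (cs.simple '' {i | i ≠ s}) :=
      mul_mem hmem (Subgroup.subset_closure ⟨j, hjs, rfl⟩)
    have hlen : cs.length u + 1 = cs.length w := (cs.isRightDescent_iff).mp hdj
    have hw_eq : w = u * cs.simple j := by
      rw [hu_def, cs.simple_mul_simple_cancel_right]
    -- reflection t₀ = u sⱼ u⁻¹ is a left inversion of w
    set t₀ := u * cs.simple j * u⁻¹ with ht₀_def
    have ht₀_refl : cs.IsReflection t₀ := ⟨u, j, rfl⟩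
    have ht₀_inv : cs.IsLeftInversion w t₀ := by
      refine ⟨ht₀_refl, ?_⟩
      have : t₀ * w = u := by
        rw [ht₀_def, hw_eq]
        simp [mul_assoc, cs.simple_mul_simple_self]
      rw [this]
      omega
    -- inversions of u are inversions of w
    have hinv_sub : {t : W | cs.IsLeftInversion u t} ⊆ {t : W | cs.IsLeftInversion w t} := by
      rintro t ⟨htr, htl⟩
      refine ⟨htr, ?_⟩
      have h1 : cs.length (t * w) ≤ cs.length (t * u) + 1 := by
        rw [hw_eq, ← mul_assoc]
        rcases cs.length_mul_simple (t * u) j with h | h <;> omega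
      omega
    -- positivity for ρ u αⱼ, and β t₀ = ρ u αⱼ
    have hnd_u : ¬ cs.IsRightDescent u j := by
      rw [cs.not_isRightDescent_iff, ← hw_eq]
      omega
    have hρuj_nonneg := repr_rho_nonneg g u j hnd_u
    have hρuj_ne : g.ρ u (g.α j) ≠ 0 := by
      intro h
      have := (g.ρ u).injective (a₁ := g.α j) (a₂ := 0) (by simpa using h)
      exact g.α.ne_zero j this
    obtain ⟨b, hb⟩ := exists_repr_pos g hρuj_ne hρuj_nonneg
    have hβt₀ : g.β t₀ = g.ρ u (g.α j) := beta_conj_eq_of_repr_pos g hb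
    -- the key algebraic identity
    have hkey : g.ρ w (g.α s) = g.ρ u (g.α s) + (-(g.a j s)) • g.ρ u (g.α j) := by
      rw [hw_eq, map_mul]
      calc (g.ρ u * g.ρ (cs.simple j)) (g.α s)
          = g.ρ u (g.ρ (cs.simple j) (g.α s)) := rfl
        _ = g.ρ u (g.α s - g.a j s • g.α j) := by rw [g.act j s]
        _ = g.ρ u (g.α s) + (-(g.a j s)) • g.ρ u (g.α j) := by
            rw [map_sub, map_smul]
            module
    -- assemble
    rw [beta_eq_rho_of_mem_closure g s hmem, hkey]
    refine InCone.add ?_ ?_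
    · have ih := ihN u (by omega) hu_mem
      rw [beta_eq_rho_of_mem_closure g s hu_mem] at ih
      exact ih.mono (Set.union_subset_union_right _ (Set.image_mono hinv_sub))
    · refine InCone.smul (neg_nonneg.mpr (g.a_offdiag j s hjs)) ?_
      rw [← hβt₀]
      exact inCone_of_mem (Set.mem_union_right _ ⟨t₀, ht₀_inv, rfl⟩)

end Main

end StmtThreeAux


/-- Let `s ∈ S` and let `w` lie in the standard parabolic subgroup
`W_{⟨s⟩} = W_{S∖{s}}`.  Then the positive root `β_{w s w⁻¹}` lies in the nonnegative linear
span of `{α_s} ∪ {β_t : t ∈ inv(w)}`. -/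
theorem beta_conj_mem_cone_of_mem_parabolic
    {B W V : Type*} [Group W] [AddCommGroup V] [Module ℝ V]
    {M : CoxeterMatrix B} (cs : CoxeterSystem M W) (g : CoxeterGeomRep M cs V)
    (s : B) (w : W) (hw : w ∈ Subgroup.closure (cs.simple '' {i | i ≠ s})) :
    InCone ({g.α s} ∪ g.β '' {t | cs.IsLeftInversion w t})
      (g.β (w * cs.simple s * w⁻¹)) := by
  exact StmtThreeAux.main_aux g s (cs.length w) w le_rfl hw
end

section
/- Let W be a Coxeter group and w ∈ W. If every cover reflection of w lies in the standard parabolic subgroup W_J, then w ∈ W_J. -/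
open CoxeterSystem List

set_option linter.unusedSectionVars false
set_option linter.unnecessarySimpa false

namespace StrongExch

variable {B W : Type*} [Group W] [DecidableEq W] {M : CoxeterMatrix B} (cs : CoxeterSystem M W)

local prefix:100 "s" => cs.simple
local prefix:100 "π" => cs.wordProd
local prefix:100 "ℓ" => cs.length




theorem altWord_add (i i' : B) (m n : ℕ) :
    CoxeterSystem.alternatingWord i i' (m + n) =
      (if Even n then CoxeterSystem.alternatingWord i i' m
        else CoxeterSystem.alternatingWord i' i m) ++ CoxeterSystem.alternatingWord i i' n := by
  induction n generalizing i i' with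
  | zero => simp [CoxeterSystem.alternatingWord]
  | succ n ih =>
    rw [← Nat.add_assoc, alternatingWord_succ, alternatingWord_succ, ih i' i]
    rcases Nat.even_or_odd n with hn | hn
    · simp [hn, Nat.not_even_iff_odd.2 hn.add_one, concat_eq_append]
    · simp [Nat.not_even_iff_odd.2 hn, hn.add_one, concat_eq_append]

theorem altWord_drop (i i' : B) (n k : ℕ) (hk : k ≤ n) :
    (CoxeterSystem.alternatingWord i i' n).drop k = CoxeterSystem.alternatingWord i i' (n - k) := by
  conv_lhs => rw [show n = k + (n - k) from by omega, altWord_add]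
  rcases Nat.even_or_odd (n - k) with h | h
  · rw [if_pos h, List.drop_left' (CoxeterSystem.length_alternatingWord i i' k)]
  · rw [if_neg (Nat.not_even_iff_odd.2 h),
      List.drop_left' (CoxeterSystem.length_alternatingWord i' i k)]

theorem altWord_getD (i i' : B) (n j : ℕ) (hj : j < n) (d : B) :
    (CoxeterSystem.alternatingWord i i' n).getD j d =
      (if Even (n - j - 1) then i' else i) := by
  have h1 : (CoxeterSystem.alternatingWord i i' n).getD j d =
      ((CoxeterSystem.alternatingWord i i' n).drop j).getD 0 d := by
    rw [List.getD, List.getD, List.getElem?_drop, Nat.add_zero]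
  rw [h1, altWord_drop i i' n j hj.le]
  have h2 : n - j = (n - j - 1) + 1 := by omega
  rw [h2, alternatingWord_succ']
  rcases Nat.even_or_odd (n - j - 1) with h | h
  · simp [h]
  · simp [Nat.not_even_iff_odd.2 h]





/-- The `k`-th reflection of the infinite dihedral pattern on `i, i'`. -/
def gR (i i' : B) (k : ℕ) : W :=
  (π (CoxeterSystem.alternatingWord i i' k))⁻¹ * s (if Even k then i' else i)
    * π (CoxeterSystem.alternatingWord i i' k)

theorem gR_eq (i i' : B) (k : ℕ) :
    gR cs i i' k
      = ((s i * s i') ^ (k - k / 2))⁻¹ * s i' * (s i * s i') ^ (k / 2) := by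
  have hbab : s i' * (s i * s i') = (s i * s i')⁻¹ * s i' := by
    rw [mul_inv_rev, cs.inv_simple, cs.inv_simple, mul_assoc]
  rw [gR, cs.prod_alternatingWord_eq_mul_pow]
  rcases Nat.even_or_odd k with h | h
  · obtain ⟨c, hc⟩ := h
    rw [if_pos ⟨c, hc⟩, if_pos ⟨c, hc⟩, one_mul, show k - k / 2 = k / 2 by omega]
  · obtain ⟨c, hc⟩ := h
    have h' : ¬ Even k := Nat.not_even_iff_odd.2 ⟨c, hc⟩
    rw [if_neg h', if_neg h', show k - k / 2 = k / 2 + 1 by omega]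
    calc (s i' * (s i * s i') ^ (k / 2))⁻¹ * s i * (s i' * (s i * s i') ^ (k / 2))
        = ((s i * s i') ^ (k / 2))⁻¹ * (s i' * (s i * s i')) * (s i * s i') ^ (k / 2) := by
          rw [mul_inv_rev, cs.inv_simple]
          group
      _ = ((s i * s i') ^ (k / 2))⁻¹ * ((s i * s i')⁻¹ * s i') * (s i * s i') ^ (k / 2) := by
          rw [hbab]
      _ = ((s i * s i') ^ (k / 2 + 1))⁻¹ * s i' * (s i * s i') ^ (k / 2) := by
          rw [pow_succ', mul_inv_rev]
          simp [mul_assoc]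

theorem conj_pow_simple (i i' : B) (n : ℕ) :
    s i' * (s i * s i') ^ n * s i' = ((s i * s i') ^ n)⁻¹ := by
  have hstep : s i' * (s i * s i') * s i' = (s i * s i')⁻¹ := by
    rw [mul_inv_rev, cs.inv_simple, cs.inv_simple]
    rw [show s i' * (s i * s i') * s i' = s i' * s i * (s i' * s i') by group,
      cs.simple_mul_simple_self, mul_one]
  induction n with
  | zero => simpa using cs.simple_mul_simple_self i'
  | succ n ih =>
    have h1 : s i' * (s i * s i') ^ (n + 1) * s i'
        = (s i' * (s i * s i') ^ n * s i') * (s i' * (s i * s i') * s i') := by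
      rw [pow_succ]
      rw [show (s i' * (s i * s i') ^ n * s i') * (s i' * (s i * s i') * s i')
          = s i' * (s i * s i') ^ n * (s i' * s i') * (s i * s i') * s i' by group,
        cs.simple_mul_simple_self, mul_one]
      group
    rw [h1, ih, hstep, ← mul_inv_rev, ← pow_succ']

theorem gR_add_period (i i' : B) (m k : ℕ) (hp1 : (s i * s i') ^ m = 1) :
    gR cs i i' (k + m) = gR cs i i' k := by
  obtain ⟨u, hu⟩ : ∃ u, u = (k + m) / 2 - k / 2 := ⟨_, rfl⟩
  have e1 : (k + m) / 2 = u + k / 2 := by omega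
  have e2 : (k + m) - (k + m) / 2 = (m - u) + (k - k / 2) := by omega
  have key : ((s i * s i') ^ (m - u))⁻¹ * s i' * (s i * s i') ^ u = s i' := by
    have h2 : ((s i * s i') ^ (m - u))⁻¹ * s i' = s i' * (s i * s i') ^ (m - u) := by
      rw [← conj_pow_simple cs i i' (m - u)]
      rw [show s i' * (s i * s i') ^ (m - u) * s i' * s i'
          = s i' * (s i * s i') ^ (m - u) * (s i' * s i') by group,
        cs.simple_mul_simple_self, mul_one]
    rw [h2, mul_assoc, ← pow_add, show m - u + u = m by omega, hp1, mul_one]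
  rw [gR_eq, gR_eq, e2, e1, pow_add, pow_add, mul_inv_rev]
  calc ((s i * s i') ^ (k - k / 2))⁻¹ * ((s i * s i') ^ (m - u))⁻¹ * s i'
        * ((s i * s i') ^ u * (s i * s i') ^ (k / 2))
      = ((s i * s i') ^ (k - k / 2))⁻¹
          * (((s i * s i') ^ (m - u))⁻¹ * s i' * (s i * s i') ^ u)
          * (s i * s i') ^ (k / 2) := by group
    _ = ((s i * s i') ^ (k - k / 2))⁻¹ * s i' * (s i * s i') ^ (k / 2) := by rw [key]





-- placeholders from p1/p2

theorem ris_altWord_getD (i i' : B) (n j : ℕ) (hj : j < n) :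
    (cs.rightInvSeq (CoxeterSystem.alternatingWord i i' n)).getD j 1
      = gR cs i i' (n - j - 1) := by
  have hl : j < (CoxeterSystem.alternatingWord i i' n).length := by
    rw [CoxeterSystem.length_alternatingWord]; exact hj
  rw [cs.getD_rightInvSeq, altWord_drop i i' n (j + 1) (by omega),
    List.getElem?_eq_getElem hl]
  simp only [Option.map_some, Option.getD_some]
  rw [← List.getD_eq_getElem _ i hl, altWord_getD i i' n j hj i]
  rw [gR, show n - (j + 1) = n - j - 1 by omega]

theorem ris_altWord_double (i i' : B) (m : ℕ) (hp1 : (s i * s i') ^ m = 1) :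
    cs.rightInvSeq (CoxeterSystem.alternatingWord i i' (m + m))
      = cs.rightInvSeq (CoxeterSystem.alternatingWord i i' m)
          ++ cs.rightInvSeq (CoxeterSystem.alternatingWord i i' m) := by
  have lm : ∀ k : ℕ, (cs.rightInvSeq (CoxeterSystem.alternatingWord i i' k)).length = k := by
    intro k
    rw [cs.length_rightInvSeq, CoxeterSystem.length_alternatingWord]
  apply List.ext_getElem
  · rw [lm, List.length_append, lm]
  · intro j h1 h2
    have hj : j < m + m := by rw [lm] at h1; exact h1
    rw [← List.getD_eq_getElem _ 1 h1, ← List.getD_eq_getElem _ 1 h2,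
      ris_altWord_getD cs i i' (m + m) j hj]
    rcases Nat.lt_or_ge j m with hjm | hjm
    · rw [List.getD_append _ _ 1 _ (by rw [lm]; exact hjm),
        ris_altWord_getD cs i i' m j hjm,
        show m + m - j - 1 = (m - j - 1) + m by omega]
      exact gR_add_period cs i i' m _ hp1
    · rw [List.getD_append_right _ _ 1 _ (by rw [lm]; exact hjm),
        lm, ris_altWord_getD cs i i' m (j - m) (by omega),
        show m - (j - m) - 1 = m + m - j - 1 by omega]

theorem count_ris_altWord_double_even [DecidableEq W] (i i' : B) (m : ℕ)
    (hp1 : (s i * s i') ^ m = 1) (t : W) :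
    Even ((cs.rightInvSeq (CoxeterSystem.alternatingWord i i' (m + m))).count t) := by
  rw [ris_altWord_double cs i i' m hp1, List.count_append]
  exact ⟨_, rfl⟩






omit [DecidableEq W] in
theorem conj_simple_eq_iff (i : B) (t : W) : s i * t * s i = s i ↔ t = s i := by
  constructor
  · intro h
    have h2 : s i * (t * s i) = s i * 1 := by rw [mul_one, ← mul_assoc]; exact h
    have h3 := mul_left_cancel h2
    rw [mul_eq_one_iff_eq_inv] at h3
    rw [h3, cs.inv_simple]
  · rintro rfl
    rw [cs.simple_mul_simple_self, one_mul]

/-- The underlying function of the permutation of `W × ZMod 2` associated to `i`. -/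
def phiFun (i : B) (x : W × ZMod 2) : W × ZMod 2 :=
  (s i * x.1 * s i, x.2 + if x.1 = s i then 1 else 0)

theorem phiFun_involutive (i : B) : Function.Involutive (phiFun cs i) := by
  rintro ⟨t, e⟩
  unfold phiFun
  have h1 : s i * (s i * t * s i) * s i = t := by
    simp only [← mul_assoc]
    rw [cs.simple_mul_simple_self, one_mul, mul_assoc, cs.simple_mul_simple_self, mul_one]
  by_cases h : t = s i
  · subst h
    rw [cs.simple_mul_simple_self, one_mul]
    simp only [if_pos rfl, h1]
    rw [cs.simple_mul_simple_self]
    have : (1 : ZMod 2) + 1 = 0 := by decide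
    simp [if_pos rfl, add_assoc, this]
  · have h2 : ¬ (s i * t * s i = s i) := fun hh => h ((conj_simple_eq_iff cs i t).1 hh)
    simp [h, h2, h1]

/-- The permutation of `W × ZMod 2` associated to the simple generator `i`. -/
def phi (i : B) : Equiv.Perm (W × ZMod 2) := (phiFun_involutive cs i).toPerm

theorem phi_apply (i : B) (t : W) (e : ZMod 2) :
    phi cs i (t, e) = (s i * t * s i, e + if t = s i then 1 else 0) := rfl

theorem prod_phi_apply (l : List B) (t : W) (e : ZMod 2) :
    (l.map (phi cs)).prod (t, e)
      = (π l * t * (π l)⁻¹, e + ((cs.rightInvSeq l).count t : ZMod 2)) := by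
  induction l generalizing t e with
  | nil => simp
  | cons i l ih =>
    rw [List.map_cons, List.prod_cons, Equiv.Perm.mul_apply, ih, phi_apply,
      cs.wordProd_cons]
    have hris : cs.rightInvSeq (i :: l) = ((π l)⁻¹ * s i * π l) :: cs.rightInvSeq l := rfl
    have hiff : π l * t * (π l)⁻¹ = s i ↔ (π l)⁻¹ * s i * π l = t := by
      constructor
      · intro h
        rw [← h]; group
      · rintro rfl; group
    have hinv : (s i * π l)⁻¹ = (π l)⁻¹ * s i := by
      rw [mul_inv_rev, cs.inv_simple]
    rw [hris, hinv]
    refine Prod.ext (by group) ?_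
    simp only [List.count_cons]
    by_cases hc : (π l)⁻¹ * s i * π l = t
    · rw [if_pos (beq_iff_eq.2 hc), if_pos (hiff.2 hc)]
      push_cast
      ring
    · have hbeq : ¬ (((π l)⁻¹ * s i * π l) == t) = true := by simpa using hc
      rw [if_neg (fun hh => hc (hiff.1 hh)), if_neg hbeq]
      push_cast
      ring

theorem pow_phi_eq_prod (i i' : B) (m : ℕ) :
    (phi cs i * phi cs i') ^ m
      = ((CoxeterSystem.alternatingWord i i' (m + m)).map (phi cs)).prod := by
  induction m with
  | zero => simp [CoxeterSystem.alternatingWord]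
  | succ m ih =>
    have h1 : m + 1 + (m + 1) = (m + m) + 1 + 1 := by omega
    rw [h1, alternatingWord_succ', alternatingWord_succ']
    rw [if_neg (by simp [Nat.even_add_one, Nat.even_add]), if_pos (by simp [Nat.even_add]),
      List.map_cons, List.map_cons, List.prod_cons, List.prod_cons, ← ih, pow_succ']
    rw [mul_assoc]

theorem phi_liftable : M.IsLiftable (phi cs) := by
  intro i i'
  rw [pow_phi_eq_prod]
  apply Equiv.ext
  rintro ⟨t, e⟩
  rw [prod_phi_apply]
  have hp1 : (s i * s i') ^ M i i' = 1 := cs.simple_mul_simple_pow i i'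
  have hπ : π (CoxeterSystem.alternatingWord i i' (M i i' + M i i')) = 1 := by
    rw [cs.prod_alternatingWord_eq_mul_pow, if_pos (by simp [Nat.even_add]),
      show (M i i' + M i i') / 2 = M i i' by omega, one_mul, hp1]
  obtain ⟨c, hc⟩ := count_ris_altWord_double_even cs i i' (M i i') hp1 t
  rw [hπ, hc]
  have hz : ((c + c : ℕ) : ZMod 2) = 0 := by
    push_cast
    rw [← two_mul, show (2 : ZMod 2) = 0 by decide, zero_mul]
  rw [hz, add_zero]
  simp

/-- The sign representation of `W` on `W × ZMod 2`. -/
def sgn : W →* Equiv.Perm (W × ZMod 2) := cs.lift ⟨phi cs, phi_liftable cs⟩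

theorem sgn_simple (i : B) : sgn cs (s i) = phi cs i := cs.lift_apply_simple (phi_liftable cs) i

theorem sgn_wordProd (l : List B) : sgn cs (π l) = (l.map (phi cs)).prod := by
  induction l with
  | nil => simp [cs.wordProd_nil]
  | cons i l ih => rw [cs.wordProd_cons, map_mul, sgn_simple, List.map_cons, List.prod_cons, ih]

/-- `nu cs w t` is the parity of the number of times `t` occurs in the right inversion
sequence of any word for `w`. -/
def nu (w t : W) : ZMod 2 := ((sgn cs w) (t, 0)).2

theorem nu_eq_count (w t : W) (l : List B) (hl : π l = w) :
    nu cs w t = ((cs.rightInvSeq l).count t : ZMod 2) := by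
  rw [nu, ← hl, sgn_wordProd, prod_phi_apply, zero_add]

theorem sgn_apply_snd (w t : W) (e : ZMod 2) : ((sgn cs w) (t, e)).2 = e + nu cs w t := by
  obtain ⟨l, hl⟩ := cs.wordProd_surjective w
  rw [← hl, nu, sgn_wordProd, prod_phi_apply, prod_phi_apply, zero_add]

theorem nu_mul_simple_self (w : W) (j : B) : nu cs (w * s j) (s j) = nu cs w (s j) + 1 := by
  have h1 : s j * s j * s j = s j := by rw [cs.simple_mul_simple_self, one_mul]
  rw [nu, map_mul, Equiv.Perm.mul_apply, sgn_simple, phi_apply, if_pos rfl, zero_add, h1,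
    sgn_apply_snd, add_comm]

theorem nu_eq_one_of_descent (w : W) (j : B) (hw : ℓ (w * s j) < ℓ w) :
    nu cs w (s j) = 1 := by
  by_contra hne
  have h0 : nu cs w (s j) = 0 := by
    rcases (show ∀ z : ZMod 2, z = 0 ∨ z = 1 by decide) (nu cs w (s j)) with h | h
    · exact h
    · exact absurd h hne
  have h1 : nu cs (w * s j) (s j) = 1 := by rw [nu_mul_simple_self, h0, zero_add]
  obtain ⟨r, hr, hrw⟩ := cs.exists_reduced_word' (w * s j)
  have hcount := nu_eq_count cs (w * s j) (s j) r hrw.symm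
  rw [h1] at hcount
  have hmem : s j ∈ cs.rightInvSeq r := by
    by_contra hnm
    rw [List.count_eq_zero_of_not_mem hnm] at hcount
    simp at hcount
  have hinv := cs.isRightInversion_of_mem_rightInvSeq hr hmem
  rw [← hrw] at hinv
  have : ℓ (w * s j * s j) < ℓ (w * s j) := hinv.2
  rw [mul_assoc, cs.simple_mul_simple_self, mul_one] at this
  omega

theorem simple_mem_ris (j : B) (w : W) (hw : ℓ (w * s j) < ℓ w)
    (l : List B) (hl : π l = w) : s j ∈ cs.rightInvSeq l := by
  have h1 := nu_eq_one_of_descent cs w j hw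
  have h2 := nu_eq_count cs w (s j) l hl
  rw [h1] at h2
  by_contra hnm
  rw [List.count_eq_zero_of_not_mem hnm] at h2
  simp at h2

/-- Right exchange: erase a letter. -/
theorem right_exchange (j : B) (w : W) (hw : ℓ (w * s j) < ℓ w)
    (l : List B) (hl : π l = w) :
    ∃ k < l.length, w * s j = π (l.eraseIdx k) := by
  have hmem := simple_mem_ris cs j w hw l hl
  obtain ⟨k, hk, hkeq⟩ := List.mem_iff_getElem.mp hmem
  rw [cs.length_rightInvSeq] at hk
  refine ⟨k, hk, ?_⟩
  have := cs.wordProd_mul_getD_rightInvSeq l k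
  rw [List.getD_eq_getElem _ 1 (by rw [cs.length_rightInvSeq]; exact hk), hkeq, hl] at this
  exact this

/-- Left exchange: erase a letter. -/
theorem left_exchange (j : B) (w : W) (hw : ℓ (s j * w) < ℓ w)
    (l : List B) (hl : π l = w) :
    ∃ k < l.length, s j * w = π (l.eraseIdx k) := by
  have hinv : ℓ (w⁻¹ * s j) < ℓ w⁻¹ := by
    rw [cs.length_inv w]
    have : (w⁻¹ * s j)⁻¹ = s j * w := by rw [mul_inv_rev, inv_inv, cs.inv_simple]
    calc ℓ (w⁻¹ * s j) = ℓ ((w⁻¹ * s j)⁻¹) := (cs.length_inv _).symm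
      _ = ℓ (s j * w) := by rw [this]
      _ < ℓ w := hw
  have hlrev : π (l.reverse) = w⁻¹ := by rw [cs.wordProd_reverse, hl]
  have hmem := simple_mem_ris cs j w⁻¹ hinv l.reverse hlrev
  rw [cs.rightInvSeq_reverse, List.mem_reverse] at hmem
  obtain ⟨k, hk, hkeq⟩ := List.mem_iff_getElem.mp hmem
  rw [cs.length_leftInvSeq] at hk
  refine ⟨k, hk, ?_⟩
  have := cs.getD_leftInvSeq_mul_wordProd l k
  rw [List.getD_eq_getElem _ 1 (by rw [cs.length_leftInvSeq]; exact hk), hkeq, hl] at this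
  exact this







omit [DecidableEq W] in
theorem wordProd_mem_closure (J : Set B) (l : List B) (h : ∀ j ∈ l, j ∈ J) :
    π l ∈ Subgroup.closure (cs.simple '' J) := by
  induction l with
  | nil => rw [cs.wordProd_nil]; exact Subgroup.one_mem _
  | cons i l ih =>
    rw [cs.wordProd_cons]
    exact Subgroup.mul_mem _
      (Subgroup.subset_closure ⟨i, h i List.mem_cons_self, rfl⟩)
      (ih fun j hj => h j (List.mem_cons_of_mem i hj))

omit [DecidableEq W] in
theorem exists_word_of_mem_closure (J : Set B) (w : W)
    (hw : w ∈ Subgroup.closure (cs.simple '' J)) :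
    ∃ l : List B, (∀ j ∈ l, j ∈ J) ∧ π l = w := by
  induction hw using Subgroup.closure_induction with
  | mem x hx =>
    obtain ⟨j, hj, rfl⟩ := hx
    exact ⟨[j], by simpa using hj, by simp⟩
  | one => exact ⟨[], by simp, by simp⟩
  | mul x y _ _ hx hy =>
    obtain ⟨lx, hlx, hpx⟩ := hx
    obtain ⟨ly, hly, hpy⟩ := hy
    refine ⟨lx ++ ly, ?_, by rw [cs.wordProd_append, hpx, hpy]⟩
    intro j hj
    rcases List.mem_append.mp hj with h | h
    · exact hlx j h
    · exact hly j h
  | inv x _ hx =>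
    obtain ⟨lx, hlx, hpx⟩ := hx
    exact ⟨lx.reverse, fun j hj => hlx j (List.mem_reverse.mp hj),
      by rw [cs.wordProd_reverse, hpx]⟩

/-- Any word can be replaced by a reduced word using a subset of its letters. -/
theorem exists_reduced_word_subset (l : List B) :
    ∃ l' : List B, (∀ j ∈ l', j ∈ l) ∧ cs.IsReduced l' ∧ π l' = π l := by
  suffices H : ∀ n (l : List B), l.length = n →
      ∃ l' : List B, (∀ j ∈ l', j ∈ l) ∧ cs.IsReduced l' ∧ π l' = π l from H l.length l rfl
  intro n
  induction n using Nat.strong_induction_on with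
  | _ n ih =>
  intro l hlen
  by_cases hred : cs.IsReduced l
  · exact ⟨l, fun j hj => hj, hred, rfl⟩
  · classical
    have hex : ∃ m, ¬ cs.IsReduced (l.take m) := ⟨l.length, by simpa using hred⟩
    have hknot : ¬ cs.IsReduced (l.take (Nat.find hex)) := Nat.find_spec hex
    set k := Nat.find hex with hkdef
    have hkpos : 0 < k := by
      rcases Nat.eq_zero_or_pos k with h0 | h0
      · exfalso; apply hknot; rw [h0]; simp [CoxeterSystem.IsReduced]
      · exact h0
    have hkred : cs.IsReduced (l.take (k - 1)) := by
      by_contra hc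
      exact Nat.find_min hex (by omega) hc
    have hkle : k ≤ l.length := Nat.find_min' hex (by simpa using hred)
    have hk'lt : k - 1 < l.length := by omega
    have hwk : ℓ (π (l.take (k - 1))) = k - 1 := by
      rw [hkred, List.length_take]; omega
    have htake : l.take (k - 1 + 1) = l.take (k - 1) ++ [l[k - 1]] := by
      rw [List.take_succ, List.getElem?_eq_getElem hk'lt]
      rfl
    have hprod : π (l.take (k - 1 + 1)) = π (l.take (k - 1)) * s (l[k - 1]) := by
      rw [htake, cs.wordProd_append, cs.wordProd_singleton]
    have hnotred : ¬ cs.IsReduced (l.take (k - 1 + 1)) := by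
      rw [show k - 1 + 1 = k by omega]; exact hknot
    have hlt : ℓ (π (l.take (k - 1)) * s (l[k - 1])) < ℓ (π (l.take (k - 1))) := by
      have hne := cs.length_mul_simple_ne (π (l.take (k - 1))) (l[k - 1])
      rcases cs.length_mul_simple (π (l.take (k - 1))) (l[k - 1]) with h | h
      · exfalso
        apply hnotred
        rw [CoxeterSystem.IsReduced, hprod, h, hwk, List.length_take]
        omega
      · omega
    obtain ⟨m, hm, hmeq⟩ := right_exchange cs (l[k - 1]) (π (l.take (k - 1))) hlt
      (l.take (k - 1)) rfl
    set l'' := (l.take (k - 1)).eraseIdx m ++ l.drop (k - 1 + 1) with hl''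
    have hπ : π l'' = π l := by
      conv_rhs => rw [← List.take_append_drop (k - 1 + 1) l]
      rw [hl'', cs.wordProd_append, cs.wordProd_append, hprod, ← hmeq]
    have hmlt : m < k - 1 := by
      rw [List.length_take] at hm; omega
    have hlen'' : l''.length = l.length - 2 := by
      rw [hl'', List.length_append, List.length_drop]
      have h1 : ((l.take (k - 1)).eraseIdx m).length + 1 = (l.take (k - 1)).length :=
        List.length_eraseIdx_add_one (by rw [List.length_take]; omega)
      rw [List.length_take] at h1
      omega
    have hsub : ∀ j ∈ l'', j ∈ l := by
      intro j hj
      rcases List.mem_append.mp hj with h | h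
      · exact List.mem_of_mem_take (List.mem_of_mem_eraseIdx h)
      · exact List.mem_of_mem_drop h
    obtain ⟨l', h1, h2, h3⟩ := ih l''.length (by omega) l'' rfl
    exact ⟨l', fun j hj => hsub j (h1 j hj), h2, by rw [h3, hπ]⟩






/-- Reduced `J`-word for a member of the standard parabolic subgroup. -/
theorem exists_reduced_J_word (J : Set B) (u : W)
    (hu : u ∈ Subgroup.closure (cs.simple '' J)) :
    ∃ l : List B, (∀ j ∈ l, j ∈ J) ∧ cs.IsReduced l ∧ π l = u := by
  obtain ⟨l0, hl0J, hl0⟩ := exists_word_of_mem_closure cs J u hu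
  obtain ⟨l, hsub, hred, hprod⟩ := exists_reduced_word_subset cs l0
  exact ⟨l, fun j hj => hl0J j (hsub j hj), hred, by rw [hprod, hl0]⟩

/-- Length additivity over a minimal coset representative. -/
theorem length_mul_of_min (J : Set B) (x : W)
    (hmin : ∀ v ∈ Subgroup.closure (cs.simple '' J), ℓ x ≤ ℓ (v * x))
    (u : W) (hu : u ∈ Subgroup.closure (cs.simple '' J)) :
    ℓ (u * x) = ℓ u + ℓ x := by
  suffices H : ∀ n (u : W), u ∈ Subgroup.closure (cs.simple '' J) → ℓ u = n →
      ℓ (u * x) = ℓ u + ℓ x from H (ℓ u) u hu rfl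
  intro n
  induction n using Nat.strong_induction_on with
  | _ n ih =>
  intro u hu hlen
  rcases eq_or_ne u 1 with rfl | hne
  · simp
  · obtain ⟨lu, hluJ, hlured, hluprod⟩ := exists_reduced_J_word cs J u hu
    have hlu_len : lu.length = ℓ u := by rw [← hluprod, hlured]
    cases lu with
    | nil => exact absurd (by rw [← hluprod, cs.wordProd_nil]) hne
    | cons j lu' =>
      have hred' : cs.IsReduced lu' := by
        have := CoxeterSystem.IsReduced.drop (ω := j :: lu') hlured 1
        simpa using this
      have hu'J : π lu' ∈ Subgroup.closure (cs.simple '' J) :=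
        wordProd_mem_closure cs J lu' (fun i hi => hluJ i (List.mem_cons_of_mem j hi))
      have hlenu' : ℓ (π lu') = lu'.length := hred'
      have hlenu : ℓ u = lu'.length + 1 := by
        rw [← hlu_len, List.length_cons]
      have hlu'_lt : ℓ (π lu') < ℓ u := by omega
      have hIH := ih (ℓ (π lu')) (by omega) (π lu') hu'J rfl
      have huexp : u = s j * π lu' := by rw [← hluprod, cs.wordProd_cons]
      rcases cs.length_simple_mul (π lu' * x) j with h | h
      · -- length goes up: done
        have hgoal : ℓ (u * x) = ℓ (s j * (π lu' * x)) := by rw [huexp, mul_assoc]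
        rw [hgoal, h, hIH]
        omega
      · -- descent: contradiction
        exfalso
        have hne2 := cs.length_simple_mul_ne (π lu' * x) j
        have hlt : ℓ (s j * (π lu' * x)) < ℓ (π lu' * x) := by omega
        obtain ⟨χ, hχred, hχ⟩ := cs.exists_reduced_word' x
        have hlχ : χ.length = ℓ x := by
          have h0 : ℓ (π χ) = χ.length := hχred
          rw [← hχ] at h0
          omega
        obtain ⟨k, hk, hkeq⟩ := left_exchange cs j (π lu' * x) hlt (lu' ++ χ)
          (by rw [cs.wordProd_append, ← hχ])
        rw [List.length_append] at hk
        rcases Nat.lt_or_ge k lu'.length with hkc | hkc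
        · rw [List.eraseIdx_append_of_lt_length hkc, cs.wordProd_append, ← hχ] at hkeq
          have hucan : u = π (lu'.eraseIdx k) := by
            have : u * x = π (lu'.eraseIdx k) * x := by
              rw [huexp, mul_assoc, hkeq]
            exact mul_right_cancel this
          have hle := cs.length_wordProd_le (lu'.eraseIdx k)
          have hlen_e : (lu'.eraseIdx k).length + 1 = lu'.length :=
            List.length_eraseIdx_add_one hkc
          rw [← hucan] at hle
          omega
        · rw [List.eraseIdx_append_of_length_le hkc, cs.wordProd_append] at hkeq
          have hkχ : k - lu'.length < χ.length := by omega
          have heq2 : ((π lu')⁻¹ * s j * π lu') * x = π (χ.eraseIdx (k - lu'.length)) := by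
            rw [show ((π lu')⁻¹ * s j * π lu') * x = (π lu')⁻¹ * (s j * (π lu' * x)) by group,
              hkeq, ← mul_assoc, inv_mul_cancel, one_mul]
          have ht'mem : (π lu')⁻¹ * s j * π lu' ∈ Subgroup.closure (cs.simple '' J) := by
            refine Subgroup.mul_mem _ (Subgroup.mul_mem _ (Subgroup.inv_mem _ hu'J) ?_) hu'J
            exact Subgroup.subset_closure ⟨j, hluJ j List.mem_cons_self, rfl⟩
          have hminx := hmin _ ht'mem
          rw [heq2] at hminx
          have hle := cs.length_wordProd_le (χ.eraseIdx (k - lu'.length))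
          have hlen_e : (χ.eraseIdx (k - lu'.length)).length + 1 = χ.length :=
            List.length_eraseIdx_add_one hkχ
          omega


end StrongExch

/-- `t` is a cover reflection of `w`: an inversion of `w` with `t * w = w * s` for some
simple generator `s` (equivalently, `w` covers `t * w` in the right weak order). -/
def IsCoverReflection {B W : Type*} [Group W] {M : CoxeterMatrix B}
    (cs : CoxeterSystem M W) (w t : W) : Prop :=
  cs.IsLeftInversion w t ∧ ∃ s : B, t * w = w * cs.simple s

/-- If every cover reflection of `w` lies in the standard parabolic
subgroup `W_J`, then `w ∈ W_J`. -/
theorem mem_parabolic_of_cover_reflections_mem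
    {B W : Type*} [Group W] {M : CoxeterMatrix B} (cs : CoxeterSystem M W)
    (J : Set B) (w : W)
    (h : ∀ t, IsCoverReflection cs w t → t ∈ Subgroup.closure (cs.simple '' J)) :
    w ∈ Subgroup.closure (cs.simple '' J) := by
  classical
  set P := Subgroup.closure (cs.simple '' J) with hP
  have hex : ∃ n, ∃ v, v ∈ P ∧ cs.length (v * w) = n :=
    ⟨cs.length w, 1, Subgroup.one_mem _, by rw [one_mul]⟩
  obtain ⟨v₀, hv₀P, hv₀len⟩ := Nat.find_spec hex
  have hmin0 : ∀ v ∈ P, cs.length (v₀ * w) ≤ cs.length (v * w) := by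
    intro v hv
    rw [hv₀len]
    exact Nat.find_min' hex ⟨v, hv, rfl⟩
  set x := v₀ * w with hx
  have hmin : ∀ v ∈ P, cs.length x ≤ cs.length (v * x) := by
    intro v hv
    have h1 : v * x = (v * v₀) * w := by rw [hx, mul_assoc]
    rw [h1]
    exact hmin0 _ (Subgroup.mul_mem _ hv hv₀P)
  rcases eq_or_ne x 1 with hx1 | hx1
  · have hw : w = v₀⁻¹ := by
      have h2 : v₀ * w = 1 := hx ▸ hx1
      exact eq_inv_of_mul_eq_one_right h2
    rw [hw]
    exact Subgroup.inv_mem _ hv₀P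
  · exfalso
    obtain ⟨i, hi⟩ := cs.exists_rightDescent_of_ne_one hx1
    have hi' : cs.length (x * cs.simple i) < cs.length x := hi
    have hwx : w = v₀⁻¹ * x := by rw [hx, ← mul_assoc, inv_mul_cancel, one_mul]
    have hadd : cs.length (v₀⁻¹ * x) = cs.length v₀⁻¹ + cs.length x :=
      StrongExch.length_mul_of_min cs J x hmin v₀⁻¹ (Subgroup.inv_mem _ hv₀P)
    have hws : cs.length (w * cs.simple i) < cs.length w := by
      have h1 : w * cs.simple i = v₀⁻¹ * (x * cs.simple i) := by rw [hwx, mul_assoc]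
      have h2 := cs.length_mul_le v₀⁻¹ (x * cs.simple i)
      have h3 : cs.length w = cs.length v₀⁻¹ + cs.length x := by rw [hwx, hadd]
      rw [h1]
      omega
    set t := w * cs.simple i * w⁻¹ with ht
    have htw : t * w = w * cs.simple i := by rw [ht]; group
    have htcover : IsCoverReflection cs w t := by
      refine ⟨⟨(cs.isReflection_simple i).conj w, ?_⟩, ⟨i, htw⟩⟩
      rw [htw]
      exact hws
    have htP : t ∈ P := h t htcover
    have hfinal : (v₀ * t * v₀⁻¹) * x = x * cs.simple i := by
      rw [ht, hx]
      group
    have hminx := hmin _ (Subgroup.mul_mem _ (Subgroup.mul_mem _ hv₀P htP)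
      (Subgroup.inv_mem _ hv₀P))
    rw [hfinal] at hminx
    omega
end

section
/- Let W be a Coxeter group, w ∈ W, and let W' be a rank two parabolic subgroup all of whose reflections are inversions of w. If t ∈ W' is a cover reflection of w, then t is a canonical generator of W'. -/
namespace CGRAux

open CoxeterSystem Finsupp

variable {B W V : Type*} [Group W] [AddCommGroup V] [Module ℝ V]
variable {M : CoxeterMatrix B} {cs : CoxeterSystem M W} (g : CoxeterGeomRep M cs V)

local prefix:100 "s" => cs.simple
local prefix:100 "π" => cs.wordProd
local prefix:100 "ℓ" => cs.length

/-- The linear functional `v ↦ ∑ₗ a i l * (coordinate of v at l)`. -/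
noncomputable def phi (i : B) : V →ₗ[ℝ] ℝ :=
  (Finsupp.linearCombination ℝ (g.a i)) ∘ₗ (g.α.repr : V →ₗ[ℝ] (B →₀ ℝ))

lemma phi_basis (i l : B) : phi g i (g.α l) = g.a i l := by
  simp [phi]

lemma rho_simple_apply (i : B) (v : V) :
    g.ρ (s i) v = v - phi g i v • g.α i := by
  have h : (g.ρ (s i) : V →ₗ[ℝ] V)
      = LinearMap.id - (phi g i).smulRight (g.α i) := by
    apply g.α.ext
    intro l
    simp only [LinearMap.sub_apply, LinearMap.id_apply, LinearMap.smulRight_apply,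
      LinearEquiv.coe_coe]
    rw [g.act i l, phi_basis]
  have := congrFun (congrArg (fun (f : V →ₗ[ℝ] V) => (f : V → V)) h) v
  simpa using this

/-- `v` has nonnegative coordinates. -/
def Pos (v : V) : Prop := ∀ l, 0 ≤ g.α.repr v l

/-- `v` has nonpositive coordinates. -/
def Neg (v : V) : Prop := ∀ l, g.α.repr v l ≤ 0

lemma eq_zero_of_pos_of_neg {v : V} (h1 : Pos g v) (h2 : Neg g v) : v = 0 := by
  have : g.α.repr v = 0 := by
    ext l; exact le_antisymm (h2 l) (h1 l)
  simpa using congrArg g.α.repr.symm this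

lemma pos_neg_neg {v : V} : Pos g (-v) ↔ Neg g v := by
  constructor <;> intro h l <;> have := h l <;> simp at this ⊢ <;> linarith

lemma pos_beta {t : W} (ht : cs.IsReflection t) : Pos g (g.β t) := by
  obtain ⟨c, hc, hβ⟩ := g.β_pos t ht
  have : g.β t = Finsupp.linearCombination ℝ (g.α : B → V) c := by
    rw [hβ, Finsupp.linearCombination_apply]
  intro l
  rw [this, ← g.α.coe_repr_symm]
  simpa using hc l

lemma rho_alpha_ne_zero (x : W) (k : B) : g.ρ x (g.α k) ≠ 0 := by
  intro h
  have : g.α k = 0 := by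
    have := congrArg (g.ρ x).symm h
    simpa using this
  exact g.α.ne_zero k this

/-- decomposition of the root of a reflection -/
lemma beta_decomp {t : W} (ht : cs.IsReflection t) :
    ∃ (x : W) (k : B), t = x * s k * x⁻¹ ∧
      (g.β t = g.ρ x (g.α k) ∨ g.β t = -(g.ρ x (g.α k))) := by
  obtain ⟨x, k, rfl⟩ := ht
  exact ⟨x, k, rfl, g.β_root x k⟩

lemma beta_ne_zero {t : W} (ht : cs.IsReflection t) : g.β t ≠ 0 := by
  obtain ⟨x, k, -, h | h⟩ := beta_decomp g ht <;> rw [h] <;>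
    simpa using rho_alpha_ne_zero g x k

lemma beta_simple (i : B) : g.β (s i) = g.α i := by
  have h := g.β_root 1 i
  rcases h with h | h
  · simpa using h
  · exfalso
    have hp : Pos g (g.β (1 * s i * 1⁻¹)) := by
      apply pos_beta
      simpa using cs.isReflection_simple i
    rw [h] at hp
    have := hp i
    simp at this
    linarith

lemma rho_simple_alpha_self (i : B) : g.ρ (s i) (g.α i) = -(g.α i) := by
  rw [g.act i i, g.a_diag i]
  module

lemma rho_mul_apply (x y : W) (v : V) : g.ρ (x * y) v = g.ρ x (g.ρ y v) := by
  rw [map_mul]; rfl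

lemma rho_inv_apply (x : W) (v : V) : g.ρ x⁻¹ (g.ρ x v) = v := by
  rw [← rho_mul_apply]; simp

lemma rho_inv_apply' (x : W) (v : V) : g.ρ x (g.ρ x⁻¹ v) = v := by
  rw [← rho_mul_apply]; simp

lemma rho_mul_apply'' (x y : W) (v : V) : (g.ρ x * g.ρ y) v = g.ρ x (g.ρ y v) := rfl

lemma rho_beta_self {t : W} (ht : cs.IsReflection t) : g.ρ t (g.β t) = -(g.β t) := by
  obtain ⟨x, k, rfl, h | h⟩ := beta_decomp g ht <;> rw [h] <;>
  · simp only [rho_mul_apply, map_neg, rho_inv_apply]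
    rw [rho_simple_alpha_self]
    simp [rho_mul_apply]

/-- conjugating a reflection: sign dichotomy for roots. -/
lemma beta_conj {t : W} (ht : cs.IsReflection t) (y : W) :
    g.β (y * t * y⁻¹) = g.ρ y (g.β t) ∨ g.β (y * t * y⁻¹) = -(g.ρ y (g.β t)) := by
  obtain ⟨x, k, rfl, h | h⟩ := beta_decomp g ht
  · have h2 := g.β_root (y * x) k
    rw [h]
    have e : y * (x * s k * x⁻¹) * y⁻¹ = (y * x) * s k * (y * x)⁻¹ := by group
    rw [e]
    simpa [rho_mul_apply, rho_mul_apply''] using h2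
  · have h2 := g.β_root (y * x) k
    rw [h]
    have e : y * (x * s k * x⁻¹) * y⁻¹ = (y * x) * s k * (y * x)⁻¹ := by group
    rw [e]
    rcases h2 with h2 | h2
    · right; rw [h2]; simp [rho_mul_apply, rho_mul_apply'']
    · left; rw [h2]; simp [rho_mul_apply, rho_mul_apply'']

/-! ### Part II: dihedral positivity -/

section Dihedral

variable (c1 c2 : ℝ)

/-- coordinate recursion along the alternating word -/
noncomputable def dihSeq : ℕ → ℝ × ℝ
  | 0 => (1, 0)
  | (m+1) => let p := dihSeq m
             if Even m then (p.1, c2 * p.1 - p.2) else (c1 * p.2 - p.1, p.2)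

lemma dihSeq_succ_even {m : ℕ} (hm : Even m) :
    dihSeq c1 c2 (m+1)
      = ((dihSeq c1 c2 m).1, c2 * (dihSeq c1 c2 m).1 - (dihSeq c1 c2 m).2) := by
  simp [dihSeq, hm]

lemma dihSeq_succ_odd {m : ℕ} (hm : ¬ Even m) :
    dihSeq c1 c2 (m+1)
      = (c1 * (dihSeq c1 c2 m).2 - (dihSeq c1 c2 m).1, (dihSeq c1 c2 m).2) := by
  simp [dihSeq, hm]

lemma dihSeq_rho (i j : B) (r : ℕ) :
    g.ρ (π (alternatingWord i j r)) (g.α i)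
      = (dihSeq (-(g.a i j)) (-(g.a j i)) r).1 • g.α i
        + (dihSeq (-(g.a i j)) (-(g.a j i)) r).2 • g.α j := by
  induction r with
  | zero => simp [dihSeq, alternatingWord]
  | succ m ih =>
    rw [CoxeterSystem.alternatingWord_succ', cs.wordProd_cons, rho_mul_apply, ih]
    by_cases hm : Even m
    · rw [if_pos hm, dihSeq_succ_even _ _ hm, map_add, map_smul, map_smul,
        rho_simple_apply g j (g.α i), rho_simple_apply g j (g.α j),
        phi_basis, phi_basis, g.a_diag]
      dsimp only
      module
    · rw [if_neg hm, dihSeq_succ_odd _ _ hm, map_add, map_smul, map_smul,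
        rho_simple_apply g i (g.α i), rho_simple_apply g i (g.α j),
        phi_basis, phi_basis, g.a_diag]
      dsimp only
      module

/-- infinite case positivity -/
lemma dihSeq_nonneg_inf (h1 : 0 ≤ c1) (h2 : 0 ≤ c2) (h4 : 4 ≤ c1 * c2) (r : ℕ) :
    0 ≤ (dihSeq c1 c2 r).1 ∧ 0 ≤ (dihSeq c1 c2 r).2 := by
  suffices h : ∀ r, 0 ≤ (dihSeq c1 c2 r).1 ∧ 0 ≤ (dihSeq c1 c2 r).2 ∧
      (if Even r then 2 * (dihSeq c1 c2 r).2 ≤ c2 * (dihSeq c1 c2 r).1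
       else 2 * (dihSeq c1 c2 r).1 ≤ c1 * (dihSeq c1 c2 r).2) by
    exact ⟨(h r).1, (h r).2.1⟩
  intro r
  induction r with
  | zero =>
    refine ⟨by norm_num [dihSeq], by norm_num [dihSeq], ?_⟩
    simp only [Even.zero, if_true]
    norm_num [dihSeq]
    positivity
  | succ m ih =>
    obtain ⟨hp, hq, hinv⟩ := ih
    by_cases hm : Even m
    · rw [if_pos hm] at hinv
      have hm1 : ¬ Even (m + 1) := by simp [Nat.even_add_one, hm]
      rw [dihSeq_succ_even c1 c2 hm, if_neg hm1]
      dsimp only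
      have e1 : 0 ≤ c2 * (dihSeq c1 c2 m).1 - (dihSeq c1 c2 m).2 := by nlinarith
      refine ⟨hp, e1, ?_⟩
      nlinarith [mul_nonneg h1 hq, mul_nonneg (mul_nonneg h1 h2) hp]
    · rw [if_neg hm] at hinv
      have hm1 : Even (m + 1) := by simp [Nat.even_add_one, hm]
      rw [dihSeq_succ_odd c1 c2 hm, if_pos hm1]
      dsimp only
      have e1 : 0 ≤ c1 * (dihSeq c1 c2 m).2 - (dihSeq c1 c2 m).1 := by nlinarith
      refine ⟨e1, hq, ?_⟩
      nlinarith [mul_nonneg h2 hp, mul_nonneg (mul_nonneg h1 h2) hq]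

private lemma helper1 (c2 A Bv C sθ cθ : ℝ) (hs : sθ ≠ 0) (hc : cθ ≠ 0)
    (h : A + C = 2 * Bv * cθ) :
    c2 * (Bv / sθ) - c2 * (C / (2 * sθ * cθ)) = c2 * (A / (2 * sθ * cθ)) := by
  have hA : A = 2 * Bv * cθ - C := by linarith
  rw [hA]
  field_simp

private lemma helper2 (c1 c2 A Bv C sθ cθ : ℝ) (hs : sθ ≠ 0) (hc : cθ ≠ 0)
    (h : A + C = 2 * Bv * cθ) (hcc : c1 * c2 = 4 * cθ ^ 2) :
    c1 * (c2 * (Bv / (2 * sθ * cθ))) - C / sθ = A / sθ := by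
  have hA : A = 2 * Bv * cθ - C := by linarith
  have e : c1 * (c2 * (Bv / (2 * sθ * cθ))) = (c1 * c2) * (Bv / (2 * sθ * cθ)) := by ring
  rw [hA, e, hcc]
  field_simp
  ring

private lemma sin_id (x θ : ℝ) :
    Real.sin (x + θ) + Real.sin (x - θ) = 2 * Real.sin x * Real.cos θ := by
  rw [Real.sin_add, Real.sin_sub]; ring

open Real in
/-- finite case positivity: `c1 * c2 = 4 cos²(π/m')`, valid for `r ≤ m' - 1`. -/
lemma dihSeq_nonneg_fin (h1 : 0 ≤ c1) (h2 : 0 ≤ c2) {m' : ℕ} (hm' : 2 ≤ m')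
    (hcc : c1 * c2 = 4 * Real.cos (Real.pi / m') ^ 2) (r : ℕ) (hr : r + 1 ≤ m') :
    0 ≤ (dihSeq c1 c2 r).1 ∧ 0 ≤ (dihSeq c1 c2 r).2 := by
  rcases eq_or_lt_of_le hm' with hm2 | hm3
  · -- m' = 2 : r ≤ 1
    have hr1 : r ≤ 1 := by omega
    interval_cases r
    · norm_num [dihSeq]
    · rw [dihSeq_succ_even c1 c2 Even.zero]
      norm_num [dihSeq]
      positivity
  · -- m' ≥ 3
    have hm3' : (3:ℝ) ≤ m' := by exact_mod_cast hm3
    have hmpos : (0:ℝ) < m' := by linarith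
    set θ := Real.pi / m' with hθ
    have hθpos : 0 < θ := by positivity
    have hθlt : θ ≤ Real.pi / 3 := by
      rw [hθ]
      apply div_le_div_of_nonneg_left Real.pi_pos.le (by norm_num) hm3'
    have hcosθ : 0 < Real.cos θ :=
      Real.cos_pos_of_mem_Ioo ⟨by linarith [Real.pi_pos], by linarith [Real.pi_gt_three]⟩
    have hsinθ : 0 < Real.sin θ := Real.sin_pos_of_pos_of_lt_pi hθpos
      (by linarith [Real.pi_gt_three])
    have hsin2θ : 0 < Real.sin (2 * θ) := by
      rw [Real.sin_two_mul]; positivity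
    have key : ∀ k, k + 1 ≤ m' →
        (dihSeq c1 c2 k).1 = Real.sin ((2 * (k / 2) + 1 : ℕ) * θ) / Real.sin θ ∧
        (dihSeq c1 c2 k).2
          = c2 * (Real.sin ((2 * ((k + 1) / 2) : ℕ) * θ) / Real.sin (2 * θ)) := by
      intro k
      induction k with
      | zero =>
        intro _
        constructor
        · norm_num [dihSeq]
          rw [div_self hsinθ.ne']
        · norm_num [dihSeq]
      | succ m ih =>
        intro hm1
        obtain ⟨e1, e2⟩ := ih (by omega)
        by_cases hm : Even m
        · have d1 : (2 * (m / 2) + 1 : ℕ) = m + 1 := by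
            obtain ⟨a, rfl⟩ := hm; omega
          have d2 : (2 * ((m + 1) / 2) : ℕ) = m := by
            obtain ⟨a, rfl⟩ := hm; omega
          have d3 : (2 * ((m + 1) / 2) + 1 : ℕ) = m + 1 := by omega
          have d4 : (2 * ((m + 1 + 1) / 2) : ℕ) = m + 2 := by
            obtain ⟨a, rfl⟩ := hm; omega
          rw [dihSeq_succ_even c1 c2 hm]
          constructor
          · dsimp only
            rw [e1, d1, d3]
          · dsimp only
            rw [e1, e2, d1, d2, d4]
            push_cast
            rw [Real.sin_two_mul]
            apply helper1 c2 _ _ _ _ _ hsinθ.ne' hcosθ.ne'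
            have := sin_id (((m:ℝ) + 1) * θ) θ
            rw [show ((m:ℝ) + 1) * θ + θ = ((m:ℝ) + 2) * θ by ring,
              show ((m:ℝ) + 1) * θ - θ = (m:ℝ) * θ by ring] at this
            linarith
        · have d1 : (2 * (m / 2) + 1 : ℕ) = m := by
            rw [Nat.not_even_iff_odd] at hm; obtain ⟨a, rfl⟩ := hm; omega
          have d2 : (2 * ((m + 1) / 2) : ℕ) = m + 1 := by
            rw [Nat.not_even_iff_odd] at hm; obtain ⟨a, rfl⟩ := hm; omega
          have d3 : (2 * ((m + 1) / 2) + 1 : ℕ) = m + 2 := by omega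
          have d4 : (2 * ((m + 1 + 1) / 2) : ℕ) = m + 1 := by
            rw [Nat.not_even_iff_odd] at hm; obtain ⟨a, rfl⟩ := hm; omega
          rw [dihSeq_succ_odd c1 c2 hm]
          constructor
          · dsimp only
            rw [e1, e2, d1, d2]
            push_cast
            rw [Real.sin_two_mul]
            apply helper2 c1 c2 _ _ _ _ _ hsinθ.ne' hcosθ.ne' _ hcc
            have := sin_id (((m:ℝ) + 1) * θ) θ
            rw [show ((m:ℝ) + 1) * θ + θ = ((m:ℝ) + 1 + 1) * θ by ring,
              show ((m:ℝ) + 1) * θ - θ = (m:ℝ) * θ by ring] at this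
            linarith
          · dsimp only
            rw [e2, d2, d4]
    obtain ⟨e1, e2⟩ := key r hr
    have hb1 : (2 * (r / 2) + 1 : ℕ) ≤ m' := by omega
    have hb2 : (2 * ((r + 1) / 2) : ℕ) ≤ m' := by omega
    have ang : ∀ n : ℕ, n ≤ m' → 0 ≤ Real.sin ((n : ℕ) * θ) := by
      intro n hn
      apply Real.sin_nonneg_of_nonneg_of_le_pi
      · positivity
      · have hn' : (n:ℝ) ≤ m' := by exact_mod_cast hn
        rw [hθ, ← mul_div_assoc, div_le_iff₀ hmpos]
        nlinarith [Real.pi_pos]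
    constructor
    · rw [e1]
      have := ang _ hb1
      positivity
    · rw [e2]
      have := ang _ hb2
      positivity

end Dihedral
/-! ### Part III: zigzag and the positivity theorem -/

lemma pos_alpha (i : B) : Pos g (g.α i) := by
  intro l
  rw [g.α.repr_self]
  rcases eq_or_ne i l with rfl | h
  · simp
  · classical rw [Finsupp.single_apply, if_neg h]

lemma zigzag : ∀ (n : ℕ) (w : W) (i j : B), ℓ w ≤ n → cs.IsRightDescent w j →
    ∃ (v : W) (r : ℕ), 1 ≤ r ∧ w = v * π (alternatingWord i j r) ∧ ℓ w = ℓ v + r ∧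
      ¬ cs.IsRightDescent v i ∧ ¬ cs.IsRightDescent v j := by
  intro n
  induction n with
  | zero =>
    intro w i j hl hd
    have : w = 1 := cs.length_eq_zero_iff.1 (Nat.le_zero.1 hl)
    subst this
    exact absurd hd (cs.not_isRightDescent_one j)
  | succ n ih =>
    intro w i j hl hd
    have hld : ℓ (w * s j) + 1 = ℓ w := cs.isRightDescent_iff.1 hd
    have hw : w = (w * s j) * s j := by
      rw [cs.simple_mul_simple_cancel_right]
    by_cases hdi : cs.IsRightDescent (w * s j) i
    · obtain ⟨v, r, hr, hw1, hlen, hvi, hvj⟩ := ih (w * s j) j i (by omega) hdi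
      refine ⟨v, r + 1, by omega, ?_, by omega, hvj, hvi⟩
      rw [CoxeterSystem.alternatingWord_succ, cs.wordProd_concat, ← mul_assoc, ← hw1, ← hw]
    · refine ⟨w * s j, 1, le_refl 1, ?_, by omega, hdi, ?_⟩
      · have e : alternatingWord i j 1 = [j] := rfl
        rw [e, cs.wordProd_singleton, ← hw]
      · intro hc
        have := cs.isRightDescent_iff.1 hc
        rw [← hw] at this
        omega

lemma pos_rho_alpha_of_not_rightDescent :
    ∀ (w : W) (i : B), ¬ cs.IsRightDescent w i → Pos g (g.ρ w (g.α i)) := by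
  suffices h : ∀ (n : ℕ) (w : W) (i : B), ℓ w ≤ n → ¬ cs.IsRightDescent w i →
      Pos g (g.ρ w (g.α i)) by
    intro w i
    exact h (ℓ w) w i le_rfl
  intro n
  induction n with
  | zero =>
    intro w i hl _
    have : w = 1 := cs.length_eq_zero_iff.1 (Nat.le_zero.1 hl)
    subst this
    have e : g.ρ 1 (g.α i) = g.α i := by rw [map_one]; rfl
    rw [e]; exact pos_alpha g i
  | succ n ih =>
    intro w i hl hasc
    rcases eq_or_ne w 1 with rfl | hw1
    · have e : g.ρ 1 (g.α i) = g.α i := by rw [map_one]; rfl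
      rw [e]; exact pos_alpha g i
    obtain ⟨j, hdj⟩ := cs.exists_rightDescent_of_ne_one hw1
    have hij : i ≠ j := by rintro rfl; exact hasc hdj
    obtain ⟨v, r, hr, hwv, hlen, hvi, hvj⟩ := zigzag (ℓ w) w i j le_rfl hdj
    -- bound on r
    have hasc' : ℓ (w * s i) = ℓ w + 1 := cs.not_isRightDescent_iff.1 hasc
    have hbound : r + 1 ≤ M i j ∨ M i j = 0 := by
      by_contra hc
      push_neg at hc
      obtain ⟨hc1, hc2⟩ := hc
      have hnr : ¬ cs.IsReduced (alternatingWord j i (r + 1)) :=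
        cs.not_isReduced_alternatingWord j i (by rwa [M.symmetric j i])
          (by rw [M.symmetric j i]; omega)
      have hlr : ℓ (π (alternatingWord j i (r + 1))) ≤ r := by
        have h1 : ℓ (π (alternatingWord j i (r + 1))) ≤ r + 1 := by
          have := cs.length_wordProd_le (alternatingWord j i (r + 1))
          rwa [CoxeterSystem.length_alternatingWord] at this
        have h2 : ℓ (π (alternatingWord j i (r + 1))) ≠ r + 1 := by
          intro hc
          exact hnr (by simp [CoxeterSystem.IsReduced, hc])
        omega
      have he : w * s i = v * π (alternatingWord j i (r + 1)) := by
        rw [CoxeterSystem.alternatingWord_succ, cs.wordProd_concat, ← mul_assoc, ← hwv]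
      have : ℓ (w * s i) ≤ ℓ v + r := by
        rw [he]
        calc ℓ (v * π (alternatingWord j i (r + 1)))
            ≤ ℓ v + ℓ (π (alternatingWord j i (r + 1))) := cs.length_mul_le _ _
          _ ≤ ℓ v + r := by omega
      omega
    -- dihedral positivity
    set c1 := -(g.a i j) with hc1
    set c2 := -(g.a j i) with hc2
    have hc1p : 0 ≤ c1 := by rw [hc1]; linarith [g.a_offdiag i j hij]
    have hc2p : 0 ≤ c2 := by rw [hc2]; linarith [g.a_offdiag j i hij.symm]
    have hpq : 0 ≤ (dihSeq c1 c2 r).1 ∧ 0 ≤ (dihSeq c1 c2 r).2 := by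
      rcases hbound with hb | hb
      · have hM2 : 2 ≤ M i j := by
          have := M.off_diagonal i j hij
          omega
        refine dihSeq_nonneg_fin c1 c2 hc1p hc2p hM2 ?_ r hb
        have := g.a_fin i j hij (by omega)
        rw [hc1, hc2]; nlinarith [this]
      · refine dihSeq_nonneg_inf c1 c2 hc1p hc2p ?_ r
        have := g.a_inf i j hb
        rw [hc1, hc2]; nlinarith [this]
    -- assemble
    have hcoords := dihSeq_rho g i j r
    rw [← hc1, ← hc2] at hcoords
    have hrw : g.ρ w (g.α i)
        = (dihSeq c1 c2 r).1 • g.ρ v (g.α i) + (dihSeq c1 c2 r).2 • g.ρ v (g.α j) := by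
      rw [hwv, rho_mul_apply, hcoords, map_add, map_smul, map_smul]
    have hvpos1 : Pos g (g.ρ v (g.α i)) := ih v i (by omega) hvi
    have hvpos2 : Pos g (g.ρ v (g.α j)) := ih v j (by omega) hvj
    intro l
    rw [hrw, map_add, map_smul, map_smul]
    have := hvpos1 l
    have := hvpos2 l
    simp only [Finsupp.coe_add, Finsupp.coe_smul, Pi.add_apply, Pi.smul_apply, smul_eq_mul]
    nlinarith [hpq.1, hpq.2]

lemma neg_rho_alpha_of_rightDescent {w : W} {i : B} (hd : cs.IsRightDescent w i) :
    Neg g (g.ρ w (g.α i)) := by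
  have hnd : ¬ cs.IsRightDescent (w * s i) i :=
    cs.isRightDescent_iff_not_isRightDescent_mul.1 hd
  have hp : Pos g (g.ρ (w * s i) (g.α i)) := pos_rho_alpha_of_not_rightDescent g _ _ hnd
  rw [← pos_neg_neg]
  have e : g.ρ (w * s i) (g.α i) = -(g.ρ w (g.α i)) := by
    rw [rho_mul_apply, rho_simple_alpha_self, map_neg]
  rwa [← e]

lemma rho_faithful {w : W} (hρ : g.ρ w = 1) : w = 1 := by
  by_contra hw
  obtain ⟨j, hdj⟩ := cs.exists_rightDescent_of_ne_one hw
  have hne := neg_rho_alpha_of_rightDescent g hdj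
  have e : g.ρ w (g.α j) = g.α j := by rw [hρ]; rfl
  rw [e] at hne
  have h1 := hne j
  rw [g.α.repr_self] at h1
  simp only [Finsupp.single_eq_same] at h1
  exact absurd h1 (by norm_num)
/-! ### Part IV: invariant bilinear form and ray-injectivity -/

lemma rho_one_apply (v : V) : g.ρ 1 v = v := by rw [map_one]; rfl

/-- the invariant symmetric bilinear form -/
noncomputable def BlL : V →ₗ[ℝ] V →ₗ[ℝ] ℝ :=
  g.α.constr ℝ (fun k => g.δ k • phi g k)

lemma BlL_alpha_left (k : B) (v : V) : BlL g (g.α k) v = g.δ k * phi g k v := by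
  rw [BlL, g.α.constr_basis]
  simp

lemma BlL_basis (k l : B) : BlL g (g.α k) (g.α l) = g.δ k * g.a k l := by
  rw [BlL_alpha_left, phi_basis]

lemma BlL_symm (v w : V) : BlL g v w = BlL g w v := by
  have h : BlL g = (BlL g).flip := by
    apply LinearMap.ext_basis g.α g.α
    intro k l
    rw [BlL_basis, LinearMap.flip_apply, BlL_basis, g.symmetrize]
  conv_lhs => rw [h]
  rfl

lemma BlL_alpha_right (k : B) (v : V) : BlL g v (g.α k) = g.δ k * phi g k v := by
  rw [BlL_symm, BlL_alpha_left]

lemma BlL_rho_simple (i : B) (v w : V) :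
    BlL g (g.ρ (s i) v) (g.ρ (s i) w) = BlL g v w := by
  rw [rho_simple_apply g i v, rho_simple_apply g i w]
  have e1 : BlL g (g.α i) w = g.δ i * phi g i w := BlL_alpha_left g i w
  have e2 : BlL g v (g.α i) = g.δ i * phi g i v := BlL_alpha_right g i v
  have e3 : BlL g (g.α i) (g.α i) = g.δ i * 2 := by rw [BlL_basis, g.a_diag]
  simp only [map_sub, map_smul, LinearMap.sub_apply, LinearMap.smul_apply, smul_eq_mul]
  rw [e1, e2, e3]
  ring

lemma BlL_neg_left (u v : V) : BlL g (-u) v = -(BlL g u v) := by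
  rw [map_neg]; rfl

lemma BlL_neg_right (u v : V) : BlL g u (-v) = -(BlL g u v) := map_neg _ _

lemma BlL_rho (x : W) (v w : V) : BlL g (g.ρ x v) (g.ρ x w) = BlL g v w := by
  induction x using cs.simple_induction_left with
  | one => rw [rho_one_apply, rho_one_apply]
  | mul_simple_left x i ih =>
    rw [rho_mul_apply, rho_mul_apply, BlL_rho_simple, ih]

lemma reflection_formula {t : W} (ht : cs.IsReflection t) :
    ∃ d : ℝ, 0 < d ∧ BlL g (g.β t) (g.β t) = 2 * d ∧
      ∀ v, g.ρ t v = v - (BlL g (g.β t) v / d) • g.β t := by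
  obtain ⟨x, k, rfl, hβ⟩ := beta_decomp g ht
  refine ⟨g.δ k, g.δ_pos k, ?_, ?_⟩
  · rcases hβ with h | h
    · rw [h, BlL_rho, BlL_basis, g.a_diag]; ring
    · rw [h, BlL_neg_left]
      rw [show ((BlL g) ((g.ρ x) (g.α k))) (-(g.ρ x) (g.α k))
          = -(((BlL g) ((g.ρ x) (g.α k))) ((g.ρ x) (g.α k))) from BlL_neg_right g _ _]
      rw [neg_neg, BlL_rho, BlL_basis, g.a_diag]; ring
  · intro v
    have e0 : g.ρ (x * s k * x⁻¹) v = v - phi g k (g.ρ x⁻¹ v) • g.ρ x (g.α k) := by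
      rw [rho_mul_apply, rho_mul_apply, rho_simple_apply g k (g.ρ x⁻¹ v), map_sub, map_smul,
        rho_inv_apply']
    have e1 : phi g k (g.ρ x⁻¹ v) = BlL g (g.ρ x (g.α k)) v / g.δ k := by
      have h1 : BlL g (g.ρ x (g.α k)) v = BlL g (g.ρ x (g.α k)) (g.ρ x (g.ρ x⁻¹ v)) := by
        rw [rho_inv_apply']
      rw [h1, BlL_rho, BlL_alpha_left]
      field_simp [(g.δ_pos k).ne']
    rcases hβ with h | h
    · rw [e0, e1, h]
    · rw [e0, e1, h, BlL_neg_left, neg_div, neg_smul, smul_neg, neg_neg]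

lemma beta_inj {t t' : W} (ht : cs.IsReflection t) (ht' : cs.IsReflection t')
    {c : ℝ} (hc : g.β t' = c • g.β t) : t' = t := by
  obtain ⟨d, hd, hn, hf⟩ := reflection_formula g ht
  obtain ⟨d', hd', hn', hf'⟩ := reflection_formula g ht'
  have hc0 : c ≠ 0 := by
    rintro rfl
    exact beta_ne_zero g ht' (by simpa using hc)
  have hdd : d' = c ^ 2 * d := by
    have : BlL g (g.β t') (g.β t') = c ^ 2 * BlL g (g.β t) (g.β t) := by
      simp only [hc, map_smul, LinearMap.smul_apply, smul_eq_mul]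
      ring
    rw [hn, hn'] at this
    linarith
  have hee : g.ρ t' = g.ρ t := by
    apply LinearEquiv.toLinearMap_injective
    apply LinearMap.ext
    intro v
    have l1 : g.ρ t' v = v - (BlL g (g.β t') v / d') • g.β t' := hf' v
    have l2 : g.ρ t v = v - (BlL g (g.β t) v / d) • g.β t := hf v
    show g.ρ t' v = g.ρ t v
    rw [l1, l2, hc, map_smul, LinearMap.smul_apply, hdd, smul_smul, smul_eq_mul]
    congr 2
    field_simp
  have h1 : g.ρ (t' * t) = 1 := by
    rw [map_mul, hee, ← map_mul, ht.mul_self, map_one]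
  have h2 : t' * t = 1 := rho_faithful g h1
  calc t' = t' * t * t := by rw [mul_assoc, ht.mul_self, mul_one]
    _ = t := by rw [h2, one_mul]

lemma pos_coord_exists {t : W} (ht : cs.IsReflection t) :
    ∃ l, 0 < g.α.repr (g.β t) l := by
  by_contra hc
  push_neg at hc
  exact beta_ne_zero g ht (eq_zero_of_pos_of_neg g (pos_beta g ht) hc)

lemma beta_parallel_simple {t : W} (ht : cs.IsReflection t) {i : B}
    (h : ∀ l, l ≠ i → g.α.repr (g.β t) l = 0) : t = s i := by
  have hrepr : g.β t = (g.α.repr (g.β t) i) • g.α i := by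
    apply g.α.repr.injective
    classical
    ext l
    rw [map_smul]
    simp only [Finsupp.coe_smul, Pi.smul_apply, smul_eq_mul, g.α.repr_self]
    rcases eq_or_ne l i with rfl | hl
    · rw [Finsupp.single_eq_same]; ring
    · rw [Finsupp.single_apply, if_neg (fun hc => hl hc.symm), h l hl]; ring
  apply beta_inj g (cs.isReflection_simple i) ht
  rw [hrepr, beta_simple]

lemma simple_conj_beta {t : W} (ht : cs.IsReflection t) {i : B} (hti : t ≠ s i) :
    g.β (s i * t * (s i)⁻¹) = g.ρ (s i) (g.β t) := by
  rcases beta_conj g ht (s i) with h | h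
  · exact h
  · exfalso
    have hex : ∃ l, l ≠ i ∧ 0 < g.α.repr (g.β t) l := by
      by_contra hc
      push_neg at hc
      exact hti (beta_parallel_simple g ht fun l hl => le_antisymm (hc l hl) (pos_beta g ht l))
    obtain ⟨l, hl, hpos⟩ := hex
    have hz : g.α.repr (g.ρ (s i) (g.β t)) l = g.α.repr (g.β t) l := by
      rw [rho_simple_apply, map_sub, map_smul]
      rw [g.α.repr_self]
      classical
      simp only [Finsupp.coe_sub, Finsupp.coe_smul, Pi.sub_apply, Pi.smul_apply, smul_eq_mul]
      rw [Finsupp.single_apply, if_neg (fun hc => hl (hc.symm))]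
      ring
    have hp : Pos g (g.β (s i * t * (s i)⁻¹)) := pos_beta g (ht.conj (s i))
    have := hp l
    rw [h] at this
    rw [map_neg] at this
    simp only [Finsupp.coe_neg, Pi.neg_apply] at this
    rw [hz] at this
    linarith
/-! ### Part V: inversions and signs of roots -/

lemma neg_neg_pos {v : V} : Neg g (-v) ↔ Pos g v := by
  constructor <;> intro h l <;> have := h l <;> simp at this ⊢ <;> linarith

lemma not_neg_of_pos_ne {v : V} (hp : Pos g v) (hv : v ≠ 0) : ¬ Neg g v :=
  fun hn => hv (eq_zero_of_pos_of_neg g hp hn)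

lemma rho_beta_pm {t : W} (ht : cs.IsReflection t) (y : W) :
    g.ρ y (g.β t) = g.β (y * t * y⁻¹) ∨ g.ρ y (g.β t) = -(g.β (y * t * y⁻¹)) := by
  rcases beta_conj g ht y with h | h
  · exact Or.inl h.symm
  · right; rw [h, neg_neg]

theorem length_mul_reflection_lt_iff :
    ∀ (w t : W), cs.IsReflection t → (ℓ (w * t) < ℓ w ↔ Neg g (g.ρ w (g.β t))) := by
  suffices h : ∀ (n : ℕ) (w t : W), ℓ w ≤ n → cs.IsReflection t →
      (ℓ (w * t) < ℓ w ↔ Neg g (g.ρ w (g.β t))) by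
    intro w t ht; exact h (ℓ w) w t le_rfl ht
  intro n
  induction n with
  | zero =>
    intro w t hl ht
    have hw : w = 1 := cs.length_eq_zero_iff.1 (Nat.le_zero.1 hl)
    subst hw
    rw [rho_one_apply]
    simp only [one_mul, cs.length_one]
    exact iff_of_false (Nat.not_lt_zero _)
      (not_neg_of_pos_ne g (pos_beta g ht) (beta_ne_zero g ht))
  | succ n ih =>
    intro w t hl ht
    rcases eq_or_ne w 1 with rfl | hw1
    · rw [rho_one_apply]
      simp only [one_mul, cs.length_one]
      exact iff_of_false (Nat.not_lt_zero _)
        (not_neg_of_pos_ne g (pos_beta g ht) (beta_ne_zero g ht))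
    obtain ⟨i, hdi⟩ := cs.exists_leftDescent_of_ne_one hw1
    have hld : ℓ (s i * w) + 1 = ℓ w := cs.isLeftDescent_iff.1 hdi
    set w' := s i * w with hw'
    have hw : w = s i * w' := by rw [hw', cs.simple_mul_simple_cancel_left]
    set u' := w' * t * w'⁻¹ with hu'
    have hu'r : cs.IsReflection u' := ht.conj w'
    have hwt : w * t = s i * (w' * t) := by rw [hw, mul_assoc]
    have hρ : g.ρ w (g.β t) = g.ρ (s i) (g.ρ w' (g.β t)) := by
      rw [hw, rho_mul_apply]
    have hihw' := ih w' t (by omega) ht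
    rcases rho_beta_pm g ht w' with hB | hA
    · -- ρ w' β t = β u' : positive case
      rw [← hu'] at hB
      have hord : ¬ ℓ (w' * t) < ℓ w' := by
        rw [hihw', hB]
        exact not_neg_of_pos_ne g (pos_beta g hu'r) (beta_ne_zero g hu'r)
      have hord' : ℓ w' < ℓ (w' * t) :=
        lt_of_le_of_ne (not_lt.1 hord) (Ne.symm (ht.length_mul_left_ne w'))
      rcases eq_or_ne u' (s i) with hus | hus
      · -- u' = s i : both sides true
        have hwt' : w' * t = s i * w' := by
          have : u' * w' = w' * t := by rw [hu']; group
          rw [← this, hus]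
        have hwteq : w * t = w' := by
          rw [hwt, hwt', cs.simple_mul_simple_cancel_left]
        have hbu : g.β u' = g.α i := by rw [hus, beta_simple]
        refine iff_of_true ?_ ?_
        · rw [hwteq]; omega
        · rw [hρ, hB, hbu, rho_simple_alpha_self, ← pos_neg_neg, neg_neg]
          exact pos_alpha g i
      · -- u' ≠ s i : both sides false
        have hz : g.β (s i * u' * (s i)⁻¹) = g.ρ (s i) (g.β u') := by
          exact simple_conj_beta g hu'r hus
        refine iff_of_false ?_ ?_
        · intro hlt
          set w'' := w * t with hw''
          have hl'' : ℓ w'' ≤ n := by omega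
          have hih'' := ih w'' t hl'' ht
          have hwt'' : w'' * t = w := by
            rw [hw'', mul_assoc, ht.mul_self, mul_one]
          have hord'' : ¬ ℓ (w'' * t) < ℓ w'' := by rw [hwt'']; omega
          have hnn : ¬ Neg g (g.ρ w'' (g.β t)) := fun hc => hord'' (hih''.2 hc)
          have hconj : w'' * t * w''⁻¹ = s i * u' * (s i)⁻¹ := by
            rw [hw'', hu', hw]
            group
          have h2 : g.ρ w'' (g.β t) = -(g.β (s i * u' * (s i)⁻¹)) := by
            rw [hw'', rho_mul_apply, rho_beta_self g ht, map_neg, hρ, hB, ← hz]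
          rcases rho_beta_pm g ht w'' with h1 | h1
          · rw [hconj] at h1
            have h4 := h1.symm.trans h2
            have h5 : (2:ℝ) • g.β (s i * u' * (s i)⁻¹) = 0 := by
              rw [two_smul]
              nth_rewrite 1 [h4]
              simp
            have h3 : g.β (s i * u' * (s i)⁻¹) = 0 := by
              simpa using (smul_eq_zero.mp h5).resolve_left (by norm_num)
            exact beta_ne_zero g (hu'r.conj (s i)) h3
          · apply hnn
            rw [h2, neg_neg_pos]
            exact pos_beta g (hu'r.conj (s i))
        · rw [hρ, hB, ← hz]
          exact not_neg_of_pos_ne g (pos_beta g (hu'r.conj (s i)))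
            (beta_ne_zero g (hu'r.conj (s i)))
    · -- ρ w' β t = -β u' : negative case
      rw [← hu'] at hA
      have hord : ℓ (w' * t) < ℓ w' := by
        rw [hihw', hA]
        rw [← pos_neg_neg, neg_neg]
        exact pos_beta g hu'r
      rcases eq_or_ne u' (s i) with hus | hus
      · exfalso
        have hwt' : w' * t = s i * w' := by
          have : u' * w' = w' * t := by rw [hu']; group
          rw [← this, hus]
        rw [hwt', ← hw] at hord
        omega
      · have hz : g.β (s i * u' * (s i)⁻¹) = g.ρ (s i) (g.β u') :=
          simple_conj_beta g hu'r hus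
        refine iff_of_true ?_ ?_
        · have h1 : ℓ (w * t) ≤ ℓ (w' * t) + 1 := by
            rw [hwt]
            rcases cs.length_simple_mul (w' * t) i with h | h <;> omega
          omega
        · rw [hρ, hA, map_neg, ← hz, neg_neg_pos]
          exact pos_beta g (hu'r.conj (s i))

lemma isLeftInversion_iff_neg {w t : W} (ht : cs.IsReflection t) :
    cs.IsLeftInversion w t ↔ Neg g (g.ρ w⁻¹ (g.β t)) := by
  have e : ℓ (w⁻¹ * t) = ℓ (t * w) := by
    rw [← cs.length_inv (w⁻¹ * t), mul_inv_rev, inv_inv, ht.inv]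
  constructor
  · intro hinv
    apply (length_mul_reflection_lt_iff g w⁻¹ t ht).1
    rw [e, cs.length_inv]
    exact hinv.2
  · intro hneg
    refine ⟨ht, ?_⟩
    have h2 := (length_mul_reflection_lt_iff g w⁻¹ t ht).2 hneg
    rwa [e, cs.length_inv] at h2

include g in
lemma finite_leftInversions : ∀ w : W, {t : W | cs.IsLeftInversion w t}.Finite := by
  suffices h : ∀ (n : ℕ) (w : W), ℓ w ≤ n → {t : W | cs.IsLeftInversion w t}.Finite by
    intro w; exact h (ℓ w) w le_rfl
  intro n
  induction n with
  | zero =>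
    intro w hl
    have hw : w = 1 := cs.length_eq_zero_iff.1 (Nat.le_zero.1 hl)
    subst hw
    convert Set.finite_empty
    ext t
    simp only [Set.mem_setOf_eq, Set.mem_empty_iff_false, iff_false]
    intro ⟨_, hlt⟩
    simp at hlt
  | succ n ih =>
    intro w hl
    rcases eq_or_ne w 1 with rfl | hw1
    · convert Set.finite_empty
      ext t
      simp only [Set.mem_setOf_eq, Set.mem_empty_iff_false, iff_false]
      intro ⟨_, hlt⟩
      simp at hlt
    obtain ⟨i, hdi⟩ := cs.exists_leftDescent_of_ne_one hw1
    have hld : ℓ (s i * w) + 1 = ℓ w := cs.isLeftDescent_iff.1 hdi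
    have hsub : {t : W | cs.IsLeftInversion w t}
        ⊆ insert (s i) ((fun t => s i * t * s i) '' {t : W | cs.IsLeftInversion (s i * w) t}) := by
      intro t hinv
      rcases eq_or_ne t (s i) with rfl | hts
      · exact Set.mem_insert _ _
      · right
        refine ⟨s i * t * s i, ?_, ?_⟩
        swap
        · show s i * (s i * t * s i) * s i = t
          rw [show s i * (s i * t * s i) * s i = (s i * s i) * t * (s i * s i) by group,
            cs.simple_mul_simple_self, one_mul, mul_one]
        have htr : cs.IsReflection t := hinv.1
        have hc : cs.IsReflection (s i * t * s i) := by
          have := htr.conj (s i)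
          rwa [cs.inv_simple] at this
        rw [Set.mem_setOf_eq, isLeftInversion_iff_neg g hc]
        have hβc : g.β (s i * t * s i) = g.ρ (s i) (g.β t) := by
          have := simple_conj_beta g htr hts
          rwa [cs.inv_simple] at this
        have hneg := (isLeftInversion_iff_neg g htr).1 hinv
        rw [hβc, ← rho_mul_apply]
        have e : (s i * w)⁻¹ * s i = w⁻¹ := by
          rw [mul_inv_rev, cs.inv_simple, mul_assoc, cs.simple_mul_simple_self, mul_one]
        rwa [e]
    exact Set.Finite.subset (Set.Finite.insert _ (Set.Finite.image _ (ih (s i * w) (by omega)))) hsub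
/-! ### Part VI: the 2-dimensional plane of a rank-two subgroup -/

lemma rho_sub_mem_span (i j : B) {d : W}
    (hd : d ∈ Subgroup.closure ({s i, s j} : Set W)) :
    ∀ v : V, g.ρ d v - v ∈ Submodule.span ℝ ({g.α i, g.α j} : Set V) := by
  induction hd using Subgroup.closure_induction with
  | mem x hx =>
    intro v
    rcases hx with rfl | hx
    · rw [rho_simple_apply]
      rw [show v - phi g i v • g.α i - v = (-(phi g i v)) • g.α i by module]
      exact Submodule.smul_mem _ _ (Submodule.subset_span (Set.mem_insert _ _))
    · rw [Set.mem_singleton_iff] at hx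
      subst hx
      rw [rho_simple_apply]
      rw [show v - phi g j v • g.α j - v = (-(phi g j v)) • g.α j by module]
      exact Submodule.smul_mem _ _
        (Submodule.subset_span (Set.mem_insert_of_mem _ (Set.mem_singleton _)))
  | one => intro v; rw [rho_one_apply]; simpa using Submodule.zero_mem _
  | mul x y hx hy ihx ihy =>
    intro v
    have e : g.ρ (x * y) v - v = (g.ρ x (g.ρ y v) - g.ρ y v) + (g.ρ y v - v) := by
      rw [rho_mul_apply]; abel
    rw [e]
    exact Submodule.add_mem _ (ihx (g.ρ y v)) (ihy v)
  | inv x hx ihx =>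
    intro v
    have e : g.ρ x⁻¹ v - v = -(g.ρ x (g.ρ x⁻¹ v) - g.ρ x⁻¹ v) := by
      rw [rho_inv_apply']; abel
    rw [e]
    exact Submodule.neg_mem _ (ihx (g.ρ x⁻¹ v))

lemma beta_mem_plane (u : W) (i j : B) {t' : W} (ht' : cs.IsReflection t')
    (hmem : t' ∈ (Subgroup.closure ({s i, s j} : Set W)).map (MulAut.conj u).toMonoidHom) :
    g.β t' ∈ Submodule.span ℝ ({g.ρ u (g.α i), g.ρ u (g.α j)} : Set V) := by
  obtain ⟨d, hd, hconj⟩ := hmem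
  have htd : t' = u * d * u⁻¹ := by
    rw [← hconj]; rfl
  have hkey : g.ρ t' (g.β t') - g.β t' ∈
      Submodule.span ℝ ({g.ρ u (g.α i), g.ρ u (g.α j)} : Set V) := by
    have e : g.ρ t' (g.β t') - g.β t'
        = g.ρ u (g.ρ d (g.ρ u⁻¹ (g.β t')) - g.ρ u⁻¹ (g.β t')) := by
      rw [map_sub, rho_inv_apply', htd, rho_mul_apply, rho_mul_apply]
    rw [e]
    have hmem2 := rho_sub_mem_span g i j hd (g.ρ u⁻¹ (g.β t'))

    have himg : g.ρ u (g.ρ d (g.ρ u⁻¹ (g.β t')) - g.ρ u⁻¹ (g.β t'))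
        ∈ (Submodule.span ℝ ({g.α i, g.α j} : Set V)).map (g.ρ u : V →ₗ[ℝ] V) :=
      Submodule.mem_map_of_mem hmem2
    rwa [Submodule.map_span, Set.image_insert_eq, Set.image_singleton] at himg
  have e2 : g.β t' = (-(1/2) : ℝ) • (g.ρ t' (g.β t') - g.β t') := by
    rw [rho_beta_self g ht']
    module
  rw [e2]
  exact Submodule.smul_mem _ _ hkey

/-- the sum-of-coordinates functional -/
noncomputable def Ff : V →ₗ[ℝ] ℝ :=
  (Finsupp.linearCombination ℝ (fun _ : B => (1:ℝ))) ∘ₗ (g.α.repr : V →ₗ[ℝ] (B →₀ ℝ))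

lemma Ff_apply (v : V) : Ff g v = (g.α.repr v).sum fun _ c => c := by
  rw [Ff]
  simp only [LinearMap.comp_apply, LinearEquiv.coe_coe, Finsupp.linearCombination_apply]
  simp [Finsupp.sum, smul_eq_mul]

lemma Ff_pos {v : V} (hp : Pos g v) (hv : v ≠ 0) : 0 < Ff g v := by
  rw [Ff_apply, Finsupp.sum]
  have hns : (g.α.repr v).support.Nonempty := by
    rw [Finsupp.support_nonempty_iff]
    intro hc
    apply hv
    have := congrArg g.α.repr.symm hc
    simpa using this
  obtain ⟨l0, hl0⟩ := hns
  apply Finset.sum_pos'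
  · intro l _; exact hp l
  · exact ⟨l0, hl0, lt_of_le_of_ne (hp l0) (Ne.symm (Finsupp.mem_support_iff.1 hl0))⟩

lemma Ff_pos_beta {t : W} (ht : cs.IsReflection t) : 0 < Ff g (g.β t) :=
  Ff_pos g (pos_beta g ht) (beta_ne_zero g ht)

/-- the second coordinate functional on the plane -/
noncomputable def Qc (u : W) (j : B) : V →ₗ[ℝ] ℝ :=
  (g.α.coord j) ∘ₗ ((g.ρ u⁻¹).toLinearMap)

lemma Qc_e1 (u : W) (i j : B) (hij : i ≠ j) : Qc g u j (g.ρ u (g.α i)) = 0 := by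
  rw [Qc]
  simp only [LinearMap.comp_apply, LinearEquiv.coe_toLinearMap]
  rw [rho_inv_apply, Module.Basis.coord_apply, g.α.repr_self]
  classical
  rw [Finsupp.single_apply, if_neg hij]

lemma Qc_e2 (u : W) (j : B) : Qc g u j (g.ρ u (g.α j)) = 1 := by
  rw [Qc]
  simp only [LinearMap.comp_apply, LinearEquiv.coe_toLinearMap]
  rw [rho_inv_apply, Module.Basis.coord_apply, g.α.repr_self]
  simp

/-! ### abstract 2D cone lemmas -/

section Cone

variable {F Q : V →ₗ[ℝ] ℝ} {e₁ e₂ : V}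

lemma sep_lemma (hQ1 : Q e₁ = 0) (hQ2 : Q e₂ = 1) (hF1 : F e₁ ≠ 0)
    {z : V} (hz : z ∈ Submodule.span ℝ ({e₁, e₂} : Set V))
    (h1 : F z = 0) (h2 : Q z = 0) : z = 0 := by
  obtain ⟨p, q, hpq⟩ := Submodule.mem_span_pair.1 hz
  have hq : q = 0 := by
    have := congrArg Q hpq
    rw [map_add, map_smul, map_smul, hQ1, hQ2, h2] at this
    simpa using this
  have hp : p = 0 := by
    have := congrArg F hpq
    rw [map_add, map_smul, map_smul, h1] at this
    subst hq
    simp only [smul_eq_mul, zero_mul, add_zero] at this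
    rcases mul_eq_zero.1 this with h | h
    · exact h
    · exact absurd h hF1
  rw [← hpq, hp, hq]
  simp

lemma cone_not {F Q : V →ₗ[ℝ] ℝ} {v : V} (hFv : 0 < F v) {X : Set V}
    (hX : ∀ x ∈ X, Q v * F x < Q x * F v) : ¬ InCone X v := by
  rintro ⟨n, x, c, hx, hc, hsum⟩
  set h : V →ₗ[ℝ] ℝ := F v • Q - Q v • F with hh
  have hhv : h v = 0 := by
    simp only [hh, LinearMap.sub_apply, LinearMap.smul_apply, smul_eq_mul]
    ring
  have hhx : ∀ k, 0 < h (x k) := by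
    intro k
    have := hX (x k) (hx k)
    simp only [hh, LinearMap.sub_apply, LinearMap.smul_apply, smul_eq_mul]
    nlinarith
  have hsum2 : (0:ℝ) = ∑ k, c k * h (x k) := by
    have := congrArg h hsum
    rw [hhv, map_sum] at this
    simpa [map_smul, smul_eq_mul] using this
  have hzero : ∀ k ∈ Finset.univ, c k * h (x k) = 0 := by
    apply (Finset.sum_eq_zero_iff_of_nonneg ?_).1 hsum2.symm
    intro k _
    exact mul_nonneg (hc k) (hhx k).le
  have hczero : ∀ k, c k = 0 := by
    intro k
    rcases mul_eq_zero.1 (hzero k (Finset.mem_univ k)) with h | h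
    · exact h
    · exact absurd h (hhx k).ne'
  have : v = 0 := by
    rw [hsum]
    apply Finset.sum_eq_zero
    intro k _
    rw [hczero k, zero_smul]
  rw [this] at hFv
  simp at hFv

lemma cone_two (hQ1 : Q e₁ = 0) (hQ2 : Q e₂ = 1) (hF1 : F e₁ ≠ 0)
    {v w₁ w₂ : V}
    (hv : v ∈ Submodule.span ℝ ({e₁, e₂} : Set V))
    (hw1 : w₁ ∈ Submodule.span ℝ ({e₁, e₂} : Set V))
    (hw2 : w₂ ∈ Submodule.span ℝ ({e₁, e₂} : Set V))
    (hFv : 0 < F v) (hFw1 : 0 < F w₁) (hFw2 : 0 < F w₂)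
    (hle1 : Q w₁ / F w₁ ≤ Q v / F v) (hle2 : Q v / F v ≤ Q w₂ / F w₂)
    (hlt : Q w₁ / F w₁ < Q w₂ / F w₂) :
    ∃ a b : ℝ, 0 ≤ a ∧ 0 ≤ b ∧ v = a • w₁ + b • w₂ := by
  set x1 := Q w₁ / F w₁ with hx1
  set x2 := Q w₂ / F w₂ with hx2
  set xv := Q v / F v with hxv
  have hd : x2 - x1 > 0 := by linarith
  refine ⟨F v * (x2 - xv) / (F w₁ * (x2 - x1)), F v * (xv - x1) / (F w₂ * (x2 - x1)),
    div_nonneg (mul_nonneg hFv.le (by linarith)) (mul_pos hFw1 hd).le,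
    div_nonneg (mul_nonneg hFv.le (by linarith)) (mul_pos hFw2 hd).le, ?_⟩
  have hQw1 : Q w₁ = x1 * F w₁ := by rw [hx1]; field_simp
  have hQw2 : Q w₂ = x2 * F w₂ := by rw [hx2]; field_simp
  have hQv : Q v = xv * F v := by rw [hxv]; field_simp
  set a := F v * (x2 - xv) / (F w₁ * (x2 - x1)) with ha
  set b := F v * (xv - x1) / (F w₂ * (x2 - x1)) with hb
  have hd' : x2 - x1 ≠ 0 := hd.ne'
  have hz : v - (a • w₁ + b • w₂) = 0 := by
    apply sep_lemma hQ1 hQ2 hF1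
    · apply Submodule.sub_mem _ hv
      exact Submodule.add_mem _ (Submodule.smul_mem _ _ hw1) (Submodule.smul_mem _ _ hw2)
    · rw [map_sub, map_add, map_smul, map_smul, ha, hb]
      rw [smul_eq_mul, smul_eq_mul]
      field_simp
      ring
    · rw [map_sub, map_add, map_smul, map_smul, ha, hb, hQw1, hQw2, hQv]
      rw [smul_eq_mul, smul_eq_mul]
      field_simp
      ring
  exact sub_eq_zero.1 hz

end Cone

end CGRAux

open CGRAux in
/-- Let `W'` be a rank two parabolic subgroup (a conjugate of a standard
parabolic subgroup generated by two simple reflections) all of whose reflections are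
inversions of `w`.  If `t ∈ W'` is a cover reflection of `w`, then `t` is a canonical
generator of `W'`. -/
theorem cover_reflection_is_canonical_generator
    {B W V : Type*} [Group W] [AddCommGroup V] [Module ℝ V]
    {M : CoxeterMatrix B} (cs : CoxeterSystem M W) (g : CoxeterGeomRep M cs V)
    (W' : Subgroup W) (w t : W)
    (hW' : ∃ (u : W) (i j : B), i ≠ j ∧
      W' = (Subgroup.closure {cs.simple i, cs.simple j}).map (MulAut.conj u).toMonoidHom)
    (hinv : ∀ t' ∈ W', cs.IsReflection t' → cs.IsLeftInversion w t')
    (htW' : t ∈ W') (hcov : IsCoverReflection cs w t) :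
    ∃ R : Set W, IsCanonicalGenerators cs g W' R ∧ t ∈ R := by
  classical
  obtain ⟨u, i, j, hij, hW'eq⟩ := hW'
  obtain ⟨⟨htrefl, htlen⟩, σ, htw⟩ := hcov
  set S : Set W := {t' | t' ∈ W' ∧ cs.IsReflection t'} with hS
  have htT : t = w * cs.simple σ * w⁻¹ := by
    rw [← htw]; group
  have htS : t ∈ S := ⟨htW', htrefl⟩
  have hSinv : ∀ t' ∈ S, cs.IsLeftInversion w t' := fun t' ht' => hinv t' ht'.1 ht'.2
  have hneg : ∀ t' ∈ S, CGRAux.Neg g (g.ρ w⁻¹ (g.β t')) := fun t' ht' =>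
    (isLeftInversion_iff_neg g ht'.2).1 (hSinv t' ht')
  have hnegroot : ∀ t' ∈ S, g.ρ w⁻¹ (g.β t') = -(g.β (w⁻¹ * t' * w)) := by
    intro t' ht'
    have hre : cs.IsReflection (w⁻¹ * t' * w⁻¹⁻¹) := ht'.2.conj w⁻¹
    rcases rho_beta_pm g ht'.2 w⁻¹ with h | h
    · exact absurd (hneg t' ht')
        (h ▸ not_neg_of_pos_ne g (pos_beta g hre) (beta_ne_zero g hre))
    · rw [h, inv_inv]
  -- functionals
  set F : V →ₗ[ℝ] ℝ := Ff g with hF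
  set Q : V →ₗ[ℝ] ℝ := Qc g u j with hQ
  set e₁ : V := g.ρ u (g.α i) with he₁
  set e₂ : V := g.ρ u (g.α j) with he₂
  have hQ1 : Q e₁ = 0 := Qc_e1 g u i j hij
  have hQ2 : Q e₂ = 1 := Qc_e2 g u j
  have hsimem : ∀ k : B, k ∈ ({i, j} : Set B) → u * cs.simple k * u⁻¹ ∈ W' := by
    intro k hk
    rw [hW'eq]
    refine ⟨cs.simple k, Subgroup.subset_closure ?_, by simp⟩
    rcases hk with rfl | hk
    · exact Set.mem_insert _ _
    · rw [Set.mem_singleton_iff] at hk; subst hk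
      exact Set.mem_insert_of_mem _ (Set.mem_singleton _)
  have hF1 : F e₁ ≠ 0 := by
    have hrefl1 : cs.IsReflection (u * cs.simple i * u⁻¹) := (cs.isReflection_simple i).conj u
    have hb := g.β_root u i
    have hFb : 0 < F (g.β (u * cs.simple i * u⁻¹)) := Ff_pos_beta g hrefl1
    rcases hb with hb | hb <;> rw [hb] at hFb
    · exact ne_of_gt hFb
    · rw [map_neg] at hFb
      intro hc
      rw [← he₁] at hFb
      rw [hc] at hFb
      simp at hFb
  have hFpos : ∀ r ∈ S, 0 < F (g.β r) := fun r hr => Ff_pos_beta g hr.2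
  have hplane : ∀ r ∈ S, g.β r ∈ Submodule.span ℝ ({e₁, e₂} : Set V) := by
    intro r hr
    exact beta_mem_plane g u i j hr.2 (hW'eq ▸ hr.1)
  set ξ : W → ℝ := fun r => Q (g.β r) / F (g.β r) with hξ
  -- injectivity of ξ on S
  have hinj : ∀ r ∈ S, ∀ r' ∈ S, ξ r = ξ r' → r = r' := by
    intro r hr r' hr' hxx
    have hcross : Q (g.β r) * F (g.β r') = Q (g.β r') * F (g.β r) := by
      have := (div_eq_div_iff (hFpos r hr).ne' (hFpos r' hr').ne').1 hxx
      linarith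
    have hz : F (g.β r) • g.β r' - F (g.β r') • g.β r = 0 := by
      apply sep_lemma hQ1 hQ2 hF1
      · exact Submodule.sub_mem _ (Submodule.smul_mem _ _ (hplane r' hr'))
          (Submodule.smul_mem _ _ (hplane r hr))
      · rw [map_sub, map_smul, map_smul, smul_eq_mul, smul_eq_mul]
        ring
      · rw [map_sub, map_smul, map_smul, smul_eq_mul, smul_eq_mul]
        linarith
    have heq : g.β r' = (F (g.β r') / F (g.β r)) • g.β r := by
      have h2 : F (g.β r) • g.β r' = F (g.β r') • g.β r := by
        rw [← sub_eq_zero]; exact hz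
      have h3 := congrArg (fun v => (F (g.β r))⁻¹ • v) h2
      simp only [smul_smul] at h3
      rw [inv_mul_cancel₀ (hFpos r hr).ne', one_smul] at h3
      rw [div_eq_inv_mul]
      exact h3
    exact (beta_inj g hr.2 hr'.2 heq).symm
  -- finiteness
  have hSfin : S.Finite :=
    Set.Finite.subset (finite_leftInversions g w) (fun t' ht' => hSinv t' ht')
  have htFs : t ∈ hSfin.toFinset := hSfin.mem_toFinset.2 htS
  obtain ⟨r₁, hr₁Fs, hr₁min⟩ := hSfin.toFinset.exists_min_image ξ ⟨t, htFs⟩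
  obtain ⟨r₂, hr₂Fs, hr₂max⟩ := hSfin.toFinset.exists_max_image ξ ⟨t, htFs⟩
  have hr₁S : r₁ ∈ S := hSfin.mem_toFinset.1 hr₁Fs
  have hr₂S : r₂ ∈ S := hSfin.mem_toFinset.1 hr₂Fs
  have hmin : ∀ r ∈ S, ξ r₁ ≤ ξ r := fun r hr => hr₁min r (hSfin.mem_toFinset.2 hr)
  have hmax : ∀ r ∈ S, ξ r ≤ ξ r₂ := fun r hr => hr₂max r (hSfin.mem_toFinset.2 hr)
  -- the candidate set
  set R : Set W := {r | r ∈ S ∧ ¬ InCone (g.β '' (S \ {r})) (g.β r)} with hR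
  -- r₁, r₂ ∈ R
  have hr₁R : r₁ ∈ R := by
    refine ⟨hr₁S, ?_⟩
    apply cone_not (F := F) (Q := Q) (hFpos r₁ hr₁S)
    rintro x ⟨t', ⟨ht'S, ht'ne⟩, rfl⟩
    have hlt : ξ r₁ < ξ t' :=
      lt_of_le_of_ne (hmin t' ht'S) (fun hc => (Set.mem_singleton_iff.not.1 ht'ne)
        (hinj t' ht'S r₁ hr₁S hc.symm) )
    rw [hξ] at hlt
    exact (div_lt_div_iff₀ (hFpos r₁ hr₁S) (hFpos t' ht'S)).1 hlt
  have hr₂R : r₂ ∈ R := by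
    refine ⟨hr₂S, ?_⟩
    apply cone_not (F := F) (Q := -Q) (hFpos r₂ hr₂S)
    rintro x ⟨t', ⟨ht'S, ht'ne⟩, rfl⟩
    have hlt : ξ t' < ξ r₂ :=
      lt_of_le_of_ne (hmax t' ht'S) (fun hc => (Set.mem_singleton_iff.not.1 ht'ne)
        (hinj t' ht'S r₂ hr₂S hc) )
    rw [hξ] at hlt
    have := (div_lt_div_iff₀ (hFpos t' ht'S) (hFpos r₂ hr₂S)).1 hlt
    simp only [LinearMap.neg_apply]
    nlinarith
  -- t ∈ R : the cover reflection argument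
  have htR : t ∈ R := by
    refine ⟨htS, ?_⟩
    rintro ⟨n, x, c, hx, hc, hsum⟩
    choose tk htkmem htkeq using fun k => hx k
    have hconjt : w⁻¹ * t * w⁻¹⁻¹ = cs.simple σ := by
      rw [htT]; group
    have hρxk : ∀ k, g.ρ w⁻¹ (x k) = -(g.β (w⁻¹ * tk k * w)) := by
      intro k
      rw [← htkeq k]
      exact hnegroot _ (htkmem k).1
    have hγrefl : ∀ k, cs.IsReflection (w⁻¹ * tk k * w) := by
      intro k
      have := (htkmem k).1.2.conj w⁻¹
      rwa [inv_inv] at this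
    have happ : g.ρ w⁻¹ (g.β t) = -(∑ k, c k • g.β (w⁻¹ * tk k * w)) := by
      rw [hsum, map_sum]
      rw [← Finset.sum_neg_distrib]
      apply Finset.sum_congr rfl
      intro k _
      rw [map_smul, hρxk k, smul_neg]
    have hsum2 : g.α σ = ∑ k, c k • g.β (w⁻¹ * tk k * w) := by
      rcases rho_beta_pm g htrefl w⁻¹ with h | h <;> rw [hconjt, beta_simple] at h
      · -- positive case: impossible by applying F
        exfalso
        rw [h] at happ
        have hFs := congrArg F happ
        rw [map_neg, map_sum] at hFs
        have hterm : ∀ k ∈ Finset.univ, (0:ℝ) ≤ F (c k • g.β (w⁻¹ * tk k * w)) := by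
          intro k _
          rw [map_smul, smul_eq_mul]
          exact mul_nonneg (hc k) (Ff_pos_beta g (hγrefl k)).le
        have hsumnn : (0:ℝ) ≤ ∑ k, F (c k • g.β (w⁻¹ * tk k * w)) :=
          Finset.sum_nonneg hterm
        have hFα : 0 < F (g.α i) ∨ True := Or.inr trivial
        have hFσ : 0 < F (g.α σ) := by
          rw [← beta_simple g σ]
          exact Ff_pos_beta g (cs.isReflection_simple σ)
        linarith
      · rw [h] at happ
        have := neg_injective happ
        exact this
    -- exists k with c k ≠ 0
    have hck : ∃ k, c k ≠ 0 := by
      by_contra hcc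
      push_neg at hcc
      have : g.α σ = 0 := by
        rw [hsum2]
        apply Finset.sum_eq_zero
        intro k _
        rw [hcc k, zero_smul]
      exact g.α.ne_zero σ this
    obtain ⟨k0, hk0⟩ := hck
    have hk0pos : 0 < c k0 := lt_of_le_of_ne (hc k0) (Ne.symm hk0)
    -- coordinates off σ vanish
    have hcoord : ∀ l, l ≠ σ → g.α.repr (g.β (w⁻¹ * tk k0 * w)) l = 0 := by
      intro l hl
      have hrepr := congrArg (fun v => g.α.repr v l) hsum2
      simp only [map_sum, map_smul] at hrepr
      rw [g.α.repr_self] at hrepr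
      classical
      rw [Finsupp.single_apply, if_neg (fun hcc => hl hcc.symm)] at hrepr
      have hsum3 : (0:ℝ) = ∑ k, c k * g.α.repr (g.β (w⁻¹ * tk k * w)) l := by
        rw [hrepr]
        rw [Finset.sum_apply']
        apply Finset.sum_congr rfl
        intro k _
        simp
      have hzero := (Finset.sum_eq_zero_iff_of_nonneg (fun k _ =>
        mul_nonneg (hc k) (pos_beta g (hγrefl k) l))).1 hsum3.symm
      have := hzero k0 (Finset.mem_univ k0)
      rcases mul_eq_zero.1 this with h | h
      · exact absurd h hk0
      · exact h
    have hpar : w⁻¹ * tk k0 * w = cs.simple σ :=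
      beta_parallel_simple g (hγrefl k0) hcoord
    have htk0 : tk k0 = t := by
      rw [htT]
      have := congrArg (fun z => w * z * w⁻¹) hpar
      rw [← this]
      group
    exact (htkmem k0).2 (by rw [htk0]; rfl)
  -- assemble
  refine ⟨R, ?_, htR⟩
  unfold IsCanonicalGenerators
  rw [← hS]
  refine ⟨fun r hr => hr.1, ?_, fun r hr => hr.2⟩
  intro t'' ht''W' ht''refl
  have ht''S : t'' ∈ S := ⟨ht''W', ht''refl⟩
  rcases eq_or_lt_of_le (hmin r₂ hr₂S) with heq | hlt
  · -- all slopes equal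
    have ht''r₁ : t'' = r₁ := by
      apply hinj t'' ht''S r₁ hr₁S
      have h1 := hmin t'' ht''S
      have h2 := hmax t'' ht''S
      have h3 := hmax r₁ hr₁S
      linarith
    refine ⟨1, ![g.β r₁], ![1], ?_, ?_, ?_⟩
    · intro k
      fin_cases k
      exact ⟨r₁, hr₁R, rfl⟩
    · intro k
      fin_cases k <;> norm_num
    · rw [ht''r₁]
      simp
  · -- two distinct extreme slopes
    obtain ⟨a, b, ha, hb, hab⟩ := cone_two hQ1 hQ2 hF1 (hplane t'' ht''S)
      (hplane r₁ hr₁S) (hplane r₂ hr₂S) (hFpos t'' ht''S) (hFpos r₁ hr₁S)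
      (hFpos r₂ hr₂S) (hmin t'' ht''S) (hmax t'' ht''S) hlt
    refine ⟨2, ![g.β r₁, g.β r₂], ![a, b], ?_, ?_, ?_⟩
    · intro k
      fin_cases k
      · exact ⟨r₁, hr₁R, rfl⟩
      · exact ⟨r₂, hr₂R, rfl⟩
    · intro k
      fin_cases k
      · simpa using ha
      · simpa using hb
    · rw [hab]
      simp [Fin.sum_univ_two]
end
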